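/- arXiv:math/0304417 — 7 statements merged into one kernel-verified Lean document; each statement's English description precedes it below -/
import Mathlib

section
/- Let δ ∈ (0,1) satisfy d(δ) > 0. Then for every arc I of the circle 𝕋, at least one of the two shifted dyadic families fits I with fit-constant 2/d(δ): that is, there exist n ∈ ℕ and 0 ≤ k < 2^n such that either I ⊆ D_n^k with |D_n^k| ≤ (2/d(δ))·|I|, or I ⊆ D_n^{δ,k} with |D_n^{δ,k}| ≤ (2/d(δ))·|I|. -/
open Real MeasureTheory Set ENNReal

/-- `d(x) = inf { 2^n |x - k 2^{-n}| : n ∈ ℕ, k ∈ ℤ }`, the relative distance of `x`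
to the dyadic rationals. -/
noncomputable def dd (x : ℝ) : ℝ :=
  sInf {y : ℝ | ∃ (n : ℕ) (k : ℤ), y = 2 ^ n * |x - k / 2 ^ n|}

/-- The arc of the circle `𝕋 = ℝ / 2πℤ` obtained as the image (mod 2π) of the
half-open interval `(a, a + ℓ]`. -/
noncomputable def arcSet (a ℓ : ℝ) : Set (AddCircle (2 * π)) :=
  (fun x : ℝ => (x : AddCircle (2 * π))) '' Set.Ioc a (a + ℓ)

set_option maxRecDepth 8000

lemma dd_le (x : ℝ) (n : ℕ) (k : ℤ) : dd x ≤ 2 ^ n * |x - k / 2 ^ n| := by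
  apply csInf_le
  · exact ⟨0, by rintro y ⟨n, k, rfl⟩; positivity⟩
  · exact ⟨n, k, rfl⟩

lemma arc_shift (a ℓ : ℝ) (j : ℤ) : arcSet (a + 2 * π * j) ℓ = arcSet a ℓ := by
  have hz : ((2 * π * j : ℝ) : AddCircle (2 * π)) = 0 := by
    rw [AddCircle.coe_eq_zero_iff]
    exact ⟨j, by rw [zsmul_eq_mul]; push_cast; ring⟩
  have h0 : ∀ y : ℝ, ((y + 2 * π * j : ℝ) : AddCircle (2 * π)) = (y : AddCircle (2 * π)) := by
    intro y
    have : ((y + 2 * π * j : ℝ) : AddCircle (2 * π))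
        = (y : AddCircle (2 * π)) + ((2 * π * j : ℝ) : AddCircle (2 * π)) := rfl
    rw [this, hz, add_zero]
  unfold arcSet
  ext x
  simp only [Set.mem_image, Set.mem_Ioc]
  constructor
  · rintro ⟨y, ⟨h1, h2⟩, rfl⟩
    refine ⟨y - 2 * π * j, ⟨by linarith, by linarith⟩, ?_⟩
    rw [← h0 (y - 2 * π * j)]; ring_nf
  · rintro ⟨y, ⟨h1, h2⟩, rfl⟩
    exact ⟨y + 2 * π * j, ⟨by linarith, by linarith⟩, h0 y⟩

lemma reduce_mod (s a ℓ : ℝ) (n : ℕ) (m : ℤ)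
    (h : Set.Ioc a (a + ℓ) ⊆ Set.Ioc (s + 2 * π * m / 2 ^ n) (s + 2 * π * m / 2 ^ n + 2 * π / 2 ^ n)) :
    ∃ k : ℕ, k < 2 ^ n ∧ arcSet a ℓ ⊆ arcSet (s + 2 * π * k / 2 ^ n) (2 * π / 2 ^ n) := by
  have h2 : (0:ℤ) < 2 ^ n := by positivity
  have hmod := Int.emod_lt_of_pos m h2
  have hnn := Int.emod_nonneg m (ne_of_gt h2)
  have hcoe : ((2 ^ n : ℕ) : ℤ) = 2 ^ n := by push_cast; ring
  refine ⟨(m % 2 ^ n).toNat, by omega, ?_⟩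
  have hZ : ((m % 2 ^ n).toNat : ℤ) = m % 2 ^ n := Int.toNat_of_nonneg hnn
  have hcast : ((m % 2 ^ n).toNat : ℝ) = ((m % 2 ^ n : ℤ) : ℝ) := by
    exact_mod_cast congrArg (fun z : ℤ => (z : ℝ)) hZ
  have hm : (m : ℝ) = ((m % 2 ^ n).toNat : ℝ) + 2 ^ n * ((m / 2 ^ n : ℤ) : ℝ) := by
    rw [hcast]
    have hI := Int.mul_ediv_add_emod m (2 ^ n)
    have hR : ((2 ^ n : ℤ) : ℝ) * ((m / 2 ^ n : ℤ) : ℝ) + ((m % 2 ^ n : ℤ) : ℝ) = (m : ℝ) := by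
      exact_mod_cast congrArg (fun z : ℤ => (z : ℝ)) hI
    push_cast at hR
    linarith
  have hne : (2:ℝ) ^ n ≠ 0 := by positivity
  have key : s + 2 * π * m / 2 ^ n
      = (s + 2 * π * ((m % 2 ^ n).toNat : ℝ) / 2 ^ n) + 2 * π * ((m / 2 ^ n : ℤ) : ℝ) := by
    rw [hm]
    field_simp
    ring
  calc arcSet a ℓ ⊆ arcSet (s + 2 * π * m / 2 ^ n) (2 * π / 2 ^ n) := Set.image_mono h
    _ = arcSet (s + 2 * π * ((m % 2 ^ n).toNat : ℝ) / 2 ^ n) (2 * π / 2 ^ n) := by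
        rw [key, arc_shift]

/-- **Proposition 2.1.** -/
theorem dyadic_or_shifted_fits (δ : ℝ) (hδ : δ ∈ Set.Ioo (0 : ℝ) 1) (hd : 0 < dd δ)
    (a ℓ : ℝ) (hℓ : 0 < ℓ) (hℓ' : ℓ ≤ 2 * π) :
    ∃ n k : ℕ, k < 2 ^ n ∧
      ((arcSet a ℓ ⊆ arcSet (2 * π * k / 2 ^ n) (2 * π / 2 ^ n) ∧
          2 * π / 2 ^ n ≤ (2 / dd δ) * ℓ) ∨
       (arcSet a ℓ ⊆ arcSet (2 * π * δ + 2 * π * k / 2 ^ n) (2 * π / 2 ^ n) ∧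
          2 * π / 2 ^ n ≤ (2 / dd δ) * ℓ)) := by
  have hπ : (0:ℝ) < π := Real.pi_pos
  set d := dd δ with hdef
  by_cases hbig : 2 * π * d ≤ ℓ
  · refine ⟨0, 0, by norm_num, Or.inl ⟨?_, ?_⟩⟩
    · haveI : Fact ((0:ℝ) < 2 * π) := ⟨by positivity⟩
      have huniv : arcSet (2 * π * ((0:ℕ):ℝ) / 2 ^ (0:ℕ)) (2 * π / 2 ^ (0:ℕ)) = Set.univ := by
        unfold arcSet
        have h1 : 2 * π * ((0:ℕ):ℝ) / 2 ^ (0:ℕ) = 0 := by norm_num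
        have h2 : 2 * π / 2 ^ (0:ℕ) = 2 * π := by norm_num
        rw [h1, h2]
        exact AddCircle.coe_image_Ioc_eq (2 * π) 0
      rw [huniv]
      exact Set.subset_univ _
    · rw [pow_zero, div_one, div_mul_eq_mul_div, le_div_iff₀ hd]
      nlinarith
  · push_neg at hbig
    have hP : ∃ n : ℕ, 2 * π * d / 2 ^ n ≤ ℓ := by
      obtain ⟨n, hn⟩ := pow_unbounded_of_one_lt (2 * π * d / ℓ) (by norm_num : (1:ℝ) < 2)
      refine ⟨n, ?_⟩
      rw [div_le_iff₀ (by positivity : (0:ℝ) < 2 ^ n)]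
      rw [div_lt_iff₀ hℓ] at hn
      nlinarith
    set n0 := Nat.find hP with hn0
    have hn0pos : 0 < n0 := by
      rcases Nat.eq_zero_or_pos n0 with h | h
      · exfalso
        have hs := Nat.find_spec hP
        rw [← hn0, h] at hs
        norm_num at hs
        linarith
      · exact h
    set n := n0 - 1 with hn
    have hupper : ℓ < 2 * π * d / 2 ^ n := by
      have := Nat.find_min hP (m := n) (by omega)
      push_neg at this
      exact this
    have hlower : 2 * π * d / 2 ^ (n + 1) ≤ ℓ := by
      have h1 : n + 1 = n0 := by omega
      rw [h1]
      exact Nat.find_spec hP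
    have hdne : d ≠ 0 := ne_of_gt hd
    have hsize : 2 * π / 2 ^ n ≤ (2 / d) * ℓ := by
      calc 2 * π / 2 ^ n = (2 / d) * (2 * π * d / 2 ^ (n + 1)) := by
            rw [pow_succ]; field_simp
        _ ≤ (2 / d) * ℓ := by
            apply mul_le_mul_of_nonneg_left hlower (by positivity)
    have hE : (0:ℝ) < 2 * π / 2 ^ n := by positivity
    set E := 2 * π / 2 ^ n with hEdef
    set m : ℤ := ⌊a / E⌋ with hm
    set m' : ℤ := ⌊(a - 2 * π * δ) / E⌋ with hm'
    have hma : (m:ℝ) * E ≤ a ∧ a < ((m:ℝ) + 1) * E := by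
      constructor
      · rw [← le_div_iff₀ hE]; exact Int.floor_le _
      · rw [← div_lt_iff₀ hE]; push_cast; exact Int.lt_floor_add_one _
    have hma' : (m':ℝ) * E + 2 * π * δ ≤ a ∧ a < ((m':ℝ) + 1) * E + 2 * π * δ := by
      constructor
      · have := Int.floor_le ((a - 2 * π * δ) / E)
        rw [le_div_iff₀ hE] at this; linarith
      · have := Int.lt_floor_add_one ((a - 2 * π * δ) / E)
        rw [div_lt_iff₀ hE] at this; push_cast at this; linarith
    by_cases hA : a + ℓ ≤ ((m:ℝ) + 1) * E
    · obtain ⟨k, hk, hsub⟩ := reduce_mod 0 a ℓ n m (by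
        intro x hx
        simp only [Set.mem_Ioc] at hx ⊢
        constructor
        · calc 0 + 2 * π * (m:ℝ) / 2 ^ n = (m:ℝ) * E := by rw [hEdef]; ring
            _ ≤ a := hma.1
            _ < x := hx.1
        · calc x ≤ a + ℓ := hx.2
            _ ≤ ((m:ℝ) + 1) * E := hA
            _ = 0 + 2 * π * (m:ℝ) / 2 ^ n + 2 * π / 2 ^ n := by rw [hEdef]; ring)
      refine ⟨n, k, hk, Or.inl ⟨?_, hsize⟩⟩
      simpa using hsub
    · by_cases hB : a + ℓ ≤ ((m':ℝ) + 1) * E + 2 * π * δ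
      · obtain ⟨k, hk, hsub⟩ := reduce_mod (2 * π * δ) a ℓ n m' (by
          intro x hx
          simp only [Set.mem_Ioc] at hx ⊢
          constructor
          · calc 2 * π * δ + 2 * π * (m':ℝ) / 2 ^ n = (m':ℝ) * E + 2 * π * δ := by rw [hEdef]; ring
              _ ≤ a := hma'.1
              _ < x := hx.1
          · calc x ≤ a + ℓ := hx.2
              _ ≤ ((m':ℝ) + 1) * E + 2 * π * δ := hB
              _ = 2 * π * δ + 2 * π * (m':ℝ) / 2 ^ n + 2 * π / 2 ^ n := by rw [hEdef]; ring)
        exact ⟨n, k, hk, Or.inr ⟨hsub, hsize⟩⟩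
      · exfalso
        push_neg at hA hB
        have hp1 : a < ((m:ℝ) + 1) * E := hma.2
        have hq1 : a < ((m':ℝ) + 1) * E + 2 * π * δ := hma'.2
        have hdist : |((m:ℝ) + 1) * E - (((m':ℝ) + 1) * E + 2 * π * δ)| < ℓ := by
          rw [abs_lt]; constructor <;> linarith
        have hkey := dd_le δ n (m - m')
        have h2n : (0:ℝ) < 2 ^ n := by positivity
        have heq : ((m:ℝ) + 1) * E - (((m':ℝ) + 1) * E + 2 * π * δ)
            = (2 * π) * (((m - m' : ℤ) : ℝ) / 2 ^ n - δ) := by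
          rw [hEdef]
          push_cast
          field_simp
          ring
        have habs : |((m:ℝ) + 1) * E - (((m':ℝ) + 1) * E + 2 * π * δ)|
            = 2 * π * |δ - ((m - m' : ℤ) : ℝ) / 2 ^ n| := by
          rw [heq, abs_mul, abs_of_pos (by positivity : (0:ℝ) < 2 * π), abs_sub_comm]
        have hge : d / 2 ^ n ≤ |δ - ((m - m' : ℤ) : ℝ) / 2 ^ n| := by
          rw [div_le_iff₀ h2n]
          linarith [hkey]
        have hfin : 2 * π * d / 2 ^ n ≤ |((m:ℝ) + 1) * E - (((m':ℝ) + 1) * E + 2 * π * δ)| := by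
          rw [habs]
          have := mul_le_mul_of_nonneg_left hge (le_of_lt (by positivity : (0:ℝ) < 2 * π))
          calc 2 * π * d / 2 ^ n = 2 * π * (d / 2 ^ n) := by ring
            _ ≤ 2 * π * |δ - ((m - m' : ℤ) : ℝ) / 2 ^ n| := this
        linarith
end

section
/- Let δ ∈ (0,1) and n ∈ ℕ. Set A_n = {2πk·2^{-n} : 0 ≤ k < 2^n} and A_n^δ = {2πδ + 2πk·2^{-n} (mod 2π) : 0 ≤ k < 2^n}, viewed as points of the circle 𝕋. Then any two distinct points a, b of A_n ∪ A_n^δ satisfy dist(a,b) ≥ d(δ)·2π·2^{-n}, where dist denotes the circle distance (the distance modulo 2π). In particular, any arc I of 𝕋 with |I| < d(δ)·2π·2^{-n} contains at most one point of A_n ∪ A_n^δ. -/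
open Real MeasureTheory Set ENNReal

/-- The set `{2πδ + 2πk·2^{-n} (mod 2π) : 0 ≤ k < 2^n}` of points of the circle;
for `δ = 0` this is `A_n`, and for general `δ` it is `A_n^δ`. -/
def gridPts (n : ℕ) (δ : ℝ) : Set (AddCircle (2 * π)) :=
  {p | ∃ k : ℕ, k < 2 ^ n ∧ p = ((2 * π * δ + 2 * π * k / 2 ^ n : ℝ) : AddCircle (2 * π))}

lemma dd_bdd (x : ℝ) : BddBelow {y : ℝ | ∃ (n : ℕ) (k : ℤ), y = 2 ^ n * |x - k / 2 ^ n|} := by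
  refine ⟨0, ?_⟩
  rintro y ⟨n, k, rfl⟩
  positivity

lemma dd_le_one {δ : ℝ} (hδ : δ ∈ Set.Ioo (0:ℝ) 1) : dd δ ≤ 1 := by
  have h := dd_le δ 0 0
  simp only [pow_zero, one_mul, Int.cast_zero, zero_div, sub_zero] at h
  rw [abs_of_pos hδ.1] at h
  linarith [hδ.2]

lemma lb_mixed (δ : ℝ) (n : ℕ) (m : ℤ) :
    dd δ * (2 * π) / 2 ^ n ≤ ‖((2 * π * (δ + m / 2 ^ n) : ℝ) : AddCircle (2 * π))‖ := by
  set t : ℝ := δ + m / 2 ^ n with ht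
  rw [AddCircle.norm_eq' _ Real.two_pi_pos]
  have h2 : (2 * π)⁻¹ * (2 * π * t) = t :=
    inv_mul_cancel_left₀ (ne_of_gt Real.two_pi_pos) t
  rw [h2]
  have key : dd δ ≤ 2 ^ n * |t - round t| := by
    have h := dd_le δ n (round t * 2 ^ n - m)
    have he : δ - ((round t * 2 ^ n - m : ℤ) : ℝ) / 2 ^ n = t - round t := by
      push_cast
      rw [ht, sub_div, mul_div_cancel_right₀ _ (by positivity : (2:ℝ)^n ≠ 0)]; ring
    rwa [he] at h
  rw [div_le_iff₀ (by positivity : (0:ℝ) < 2 ^ n)]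
  nlinarith [Real.two_pi_pos, key, abs_nonneg (t - round t)]

lemma lb_same {δ : ℝ} (hδ1 : dd δ ≤ 1) (n : ℕ) (m : ℤ) (hm : ¬ ((2:ℤ) ^ n ∣ m)) :
    dd δ * (2 * π) / 2 ^ n ≤ ‖((2 * π * ((m : ℝ) / 2 ^ n) : ℝ) : AddCircle (2 * π))‖ := by
  set t : ℝ := (m : ℝ) / 2 ^ n with ht
  rw [AddCircle.norm_eq' _ Real.two_pi_pos]
  have h2 : (2 * π)⁻¹ * (2 * π * t) = t :=
    inv_mul_cancel_left₀ (ne_of_gt Real.two_pi_pos) t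
  rw [h2]
  have hz : (m - round t * 2 ^ n : ℤ) ≠ 0 := by
    intro h
    apply hm
    exact ⟨round t, by linarith [sub_eq_zero.mp h]⟩
  have h1z : (1 : ℝ) ≤ |((m - round t * 2 ^ n : ℤ) : ℝ)| := by
    rw [← Int.cast_abs]
    exact_mod_cast Int.one_le_abs hz
  have he : ((m - round t * 2 ^ n : ℤ) : ℝ) = 2 ^ n * (t - round t) := by
    push_cast
    rw [ht, mul_sub, mul_div_cancel₀ _ (by positivity : (2:ℝ)^n ≠ 0)]; ring
  have key : dd δ ≤ 2 ^ n * |t - round t| := by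
    calc dd δ ≤ 1 := hδ1
    _ ≤ |((m - round t * 2 ^ n : ℤ) : ℝ)| := h1z
    _ = 2 ^ n * |t - round t| := by rw [he, abs_mul, abs_of_pos (by positivity : (0:ℝ) < 2^n)]
  rw [div_le_iff₀ (by positivity : (0:ℝ) < 2 ^ n)]
  nlinarith [Real.two_pi_pos, key, abs_nonneg (t - round t)]

/-- Any two distinct points of `A_n ∪ A_n^δ` are at circle distance at least
`d(δ)·2π·2^{-n}`; consequently every arc of length `< d(δ)·2π·2^{-n}` contains at most
one point of `A_n ∪ A_n^δ`. -/
theorem gridPts_separated (δ : ℝ) (hδ : δ ∈ Set.Ioo (0 : ℝ) 1) (n : ℕ) :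
    (∀ a b : AddCircle (2 * π), a ∈ gridPts n 0 ∪ gridPts n δ →
        b ∈ gridPts n 0 ∪ gridPts n δ → a ≠ b → dd δ * (2 * π) / 2 ^ n ≤ dist a b) ∧
    (∀ x ℓ : ℝ, 0 < ℓ → ℓ ≤ 2 * π → ℓ < dd δ * (2 * π) / 2 ^ n →
        Set.Subsingleton (arcSet x ℓ ∩ (gridPts n 0 ∪ gridPts n δ))) := by
  have hdd1 := dd_le_one hδ
  have hdvd' : ∀ k j : ℕ, k < 2 ^ n → j < 2 ^ n → (k : ℤ) - j ≠ 0 →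
      ¬ ((2:ℤ) ^ n ∣ ((k:ℤ) - j)) := by
    intro k j hk hj hne hd
    have h1 : (2:ℤ) ^ n ≤ |(k:ℤ) - j| := Int.le_of_dvd (abs_pos.mpr hne) ((dvd_abs _ _).mpr hd)
    have hk' : (k:ℤ) < 2 ^ n := by exact_mod_cast hk
    have hj' : (j:ℤ) < 2 ^ n := by exact_mod_cast hj
    have hk0 : (0:ℤ) ≤ (k:ℤ) := Int.natCast_nonneg k
    have hj0 : (0:ℤ) ≤ (j:ℤ) := Int.natCast_nonneg j
    rcases abs_cases ((k:ℤ) - j) with ⟨h2, _⟩ | ⟨h2, _⟩ <;> linarith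
  have sep : ∀ a b : AddCircle (2 * π), a ∈ gridPts n 0 ∪ gridPts n δ →
      b ∈ gridPts n 0 ∪ gridPts n δ → a ≠ b → dd δ * (2 * π) / 2 ^ n ≤ dist a b := by
    rintro a b (⟨k, hk, rfl⟩ | ⟨k, hk, rfl⟩) (⟨j, hj, rfl⟩ | ⟨j, hj, rfl⟩) hab
    · have hne : (k:ℤ) - j ≠ 0 := by
        intro h
        exact hab (by rw [show k = j by omega])
      calc dd δ * (2 * π) / 2 ^ n
          ≤ ‖((2 * π * ((((k:ℤ) - j : ℤ) : ℝ) / 2 ^ n) : ℝ) : AddCircle (2 * π))‖ :=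
            lb_same hdd1 n _ (hdvd' k j hk hj hne)
        _ = _ := by rw [dist_eq_norm, ← AddCircle.coe_sub]; congr 1; push_cast; ring
    · calc dd δ * (2 * π) / 2 ^ n
          ≤ ‖((2 * π * (δ + (((j:ℤ) - k : ℤ) : ℝ) / 2 ^ n) : ℝ) : AddCircle (2 * π))‖ :=
            lb_mixed δ n _
        _ = _ := by
            rw [dist_comm, dist_eq_norm, ← AddCircle.coe_sub]; congr 1; push_cast; ring
    · calc dd δ * (2 * π) / 2 ^ n
          ≤ ‖((2 * π * (δ + (((k:ℤ) - j : ℤ) : ℝ) / 2 ^ n) : ℝ) : AddCircle (2 * π))‖ :=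
            lb_mixed δ n _
        _ = _ := by rw [dist_eq_norm, ← AddCircle.coe_sub]; congr 1; push_cast; ring
    · have hne : (k:ℤ) - j ≠ 0 := by
        intro h
        exact hab (by rw [show k = j by omega])
      calc dd δ * (2 * π) / 2 ^ n
          ≤ ‖((2 * π * ((((k:ℤ) - j : ℤ) : ℝ) / 2 ^ n) : ℝ) : AddCircle (2 * π))‖ :=
            lb_same hdd1 n _ (hdvd' k j hk hj hne)
        _ = _ := by rw [dist_eq_norm, ← AddCircle.coe_sub]; congr 1; push_cast; ring
  refine ⟨sep, ?_⟩
  intro x ℓ hℓ0 _ hℓsep a ha b hb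
  by_contra hab
  obtain ⟨⟨s, hs, rfl⟩, haG⟩ := ha
  obtain ⟨⟨t, htI, rfl⟩, hbG⟩ := hb
  have h1 := sep _ _ haG hbG hab
  have h2 : dist ((s : AddCircle (2 * π))) (t : AddCircle (2 * π)) ≤ |s - t| := by
    rw [dist_eq_norm, ← AddCircle.coe_sub]
    exact QuotientAddGroup.norm_mk_le_norm
  have h3 : |s - t| < ℓ := by
    rw [abs_sub_lt_iff]
    constructor <;> [linarith [hs.1, hs.2, htI.1, htI.2]; linarith [hs.1, hs.2, htI.1, htI.2]]
  linarith
end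

section
/- Let δ ∈ (0,1) with d(δ) > 0. Then BMO(𝕋) = BMO_𝒟(𝕋) ∩ BMO_{𝒟^δ}(𝕋) with equivalent norms: for every φ ∈ L¹(𝕋), max{‖φ‖_{BMO_𝒟(𝕋)}, ‖φ(· − 2πδ)‖_{BMO_𝒟(𝕋)}} ≤ ‖φ‖_{BMO(𝕋)} ≤ (4/d(δ))·max{‖φ‖_{BMO_𝒟(𝕋)}, ‖φ(· − 2πδ)‖_{BMO_𝒟(𝕋)}}. In particular, ‖φ‖_{BMO(𝕋)} is finite if and only if both ‖φ‖_{BMO_𝒟(𝕋)} and ‖φ(· − 2πδ)‖_{BMO_𝒟(𝕋)} are finite. -/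
open Real MeasureTheory Set ENNReal

/-- The average `φ_I = (1/|I|) ∫_I φ` over the arc `I = (a, a + ℓ]` (mod 2π);
for a 2π-periodic `φ` this is the average over the corresponding arc of `𝕋`. -/
noncomputable def avgIoc (φ : ℝ → ℝ) (a ℓ : ℝ) : ℝ :=
  (1 / ℓ) * ∫ x in Set.Ioc a (a + ℓ), φ x

/-- The mean oscillation `(1/|I|) ∫_I |φ - φ_I|` over the arc `I = (a, a + ℓ]`. -/
noncomputable def oscIoc (φ : ℝ → ℝ) (a ℓ : ℝ) : ℝ :=
  (1 / ℓ) * ∫ x in Set.Ioc a (a + ℓ), |φ x - avgIoc φ a ℓ|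

/-- `‖φ‖_{BMO(𝕋)}`: the supremum of mean oscillations over all arcs of `𝕋`
(arcs being images mod 2π of intervals `(a, a+ℓ]` with `0 < ℓ ≤ 2π`),
as an extended nonnegative real. -/
noncomputable def bmoNorm (φ : ℝ → ℝ) : ℝ≥0∞ :=
  ⨆ (a : ℝ) (ℓ : ℝ) (_ : 0 < ℓ) (_ : ℓ ≤ 2 * π), ENNReal.ofReal (oscIoc φ a ℓ)

/-- `‖φ‖_{BMO_𝒟(𝕋)}`: the supremum of mean oscillations over the dyadic intervals
`D_n^k = (2πk·2^{-n}, 2π(k+1)·2^{-n}]`, `n ∈ ℕ`, `0 ≤ k < 2^n`. -/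
noncomputable def dyadicBmoNorm (φ : ℝ → ℝ) : ℝ≥0∞ :=
  ⨆ (n : ℕ) (k : ℕ) (_ : k < 2 ^ n),
    ENNReal.ofReal (oscIoc φ (2 * π * k / 2 ^ n) (2 * π / 2 ^ n))

lemma setIntegral_Ioc_comp_sub (f : ℝ → ℝ) (a ℓ c : ℝ) (hℓ : 0 ≤ ℓ) :
    ∫ x in Set.Ioc a (a + ℓ), f (x - c) = ∫ x in Set.Ioc (a - c) (a - c + ℓ), f x := by
  rw [← intervalIntegral.integral_of_le (by linarith : a ≤ a + ℓ),
    ← intervalIntegral.integral_of_le (by linarith : a - c ≤ a - c + ℓ),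
    intervalIntegral.integral_comp_sub_right]
  congr 1
  ring

lemma avgIoc_comp_sub (f : ℝ → ℝ) (a ℓ c : ℝ) (hℓ : 0 ≤ ℓ) :
    avgIoc (fun x => f (x - c)) a ℓ = avgIoc f (a - c) ℓ := by
  unfold avgIoc
  rw [setIntegral_Ioc_comp_sub f a ℓ c hℓ]

lemma oscIoc_comp_sub (f : ℝ → ℝ) (a ℓ c : ℝ) (hℓ : 0 ≤ ℓ) :
    oscIoc (fun x => f (x - c)) a ℓ = oscIoc f (a - c) ℓ := by
  unfold oscIoc
  rw [avgIoc_comp_sub f a ℓ c hℓ,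
    ← setIntegral_Ioc_comp_sub (fun y => |f y - avgIoc f (a - c) ℓ|) a ℓ c hℓ]

lemma oscIoc_shift {f : ℝ → ℝ} {T : ℝ} (hf : Function.Periodic f T) (a ℓ : ℝ)
    (hℓ : 0 ≤ ℓ) (m : ℤ) : oscIoc f (a + m * T) ℓ = oscIoc f a ℓ := by
  have hfe : (fun x => f (x - ((-m : ℤ) : ℝ) * T)) = f :=
    funext fun x => hf.sub_int_mul_eq (-m)
  have := oscIoc_comp_sub f a ℓ (((-m : ℤ) : ℝ) * T) hℓ
  rw [hfe] at this
  rw [this]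
  congr 1
  push_cast
  ring

lemma oscIoc_nonneg (f : ℝ → ℝ) (a ℓ : ℝ) (hℓ : 0 ≤ ℓ) : 0 ≤ oscIoc f a ℓ := by
  unfold oscIoc
  have h1 : (0:ℝ) ≤ 1 / ℓ := by positivity
  exact mul_nonneg h1 (integral_nonneg fun x => abs_nonneg _)

lemma periodic_intervalIntegrable {f : ℝ → ℝ} {T : ℝ} (hT : 0 < T)
    (hf : Function.Periodic f T) (h0 : IntervalIntegrable f volume 0 T) :
    ∀ a b : ℝ, IntervalIntegrable f volume a b := by
  have hm : ∀ m : ℤ, IntervalIntegrable f volume (m * T) (m * T + T) := by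
    intro m
    have h1 := h0.comp_sub_right ((m : ℝ) * T)
    have h2 : (fun x => f (x - (m : ℝ) * T)) = f := funext fun x => hf.sub_int_mul_eq m
    rw [h2] at h1
    simpa [zero_add, add_comm] using h1
  have hmn : ∀ (n : ℕ) (m : ℤ), IntervalIntegrable f volume (m * T) (m * T + n * T) := by
    intro n
    induction n with
    | zero => intro m; simp
    | succ k ih =>
      intro m
      have h4 : IntervalIntegrable f volume (m * T + k * T) (m * T + (k + 1) * T) := by
        have h5 := hm (m + k)
        have e1 : ((m + k : ℤ) : ℝ) * T = m * T + k * T := by push_cast; ring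
        have e2 : ((m + k : ℤ) : ℝ) * T + T = m * T + (k + 1) * T := by push_cast; ring
        rwa [e2, e1] at h5
      have := (ih m).trans h4
      push_cast
      exact this
  have main : ∀ a b : ℝ, a ≤ b → IntervalIntegrable f volume a b := by
    intro a b hab
    set m : ℤ := ⌊a / T⌋ with hm'
    have hma : (m : ℝ) * T ≤ a := by
      rw [← le_div_iff₀ hT]
      exact Int.floor_le _
    obtain ⟨n, hn⟩ := exists_nat_ge ((b - m * T) / T)
    have hbn : b ≤ m * T + n * T := by
      have := (div_le_iff₀ hT).1 hn
      linarith
    refine (hmn n m).mono_set ?_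
    rw [Set.uIcc_of_le hab, Set.uIcc_of_le (by nlinarith [hT.le, Nat.cast_nonneg (α := ℝ) n])]
    exact Set.Icc_subset_Icc hma hbn
  intro a b
  rcases le_total a b with hab | hab
  · exact main a b hab
  · exact (main b a hab).symm

lemma oscIoc_le_of_bound (f : ℝ → ℝ) (a ℓ c K : ℝ) (hℓ : 0 < ℓ)
    (hi : IntegrableOn f (Set.Ioc a (a + ℓ)))
    (hK : ∫ x in Set.Ioc a (a + ℓ), |f x - c| ≤ K) :
    oscIoc f a ℓ ≤ 2 * K / ℓ := by
  set A := avgIoc f a ℓ with hA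
  set I := Set.Ioc a (a + ℓ) with hI
  have hvol : (volume I).toReal = ℓ := by
    rw [hI, Real.volume_Ioc]
    rw [ENNReal.toReal_ofReal (by linarith)]
    ring
  have hconst : ∀ c' : ℝ, IntegrableOn (fun _ => c') I := fun c' =>
    integrableOn_const (by rw [hI]; exact measure_Ioc_lt_top.ne)
  have hic : IntegrableOn (fun x => |f x - c|) I := (hi.sub (hconst c)).abs
  have hicA : IntegrableOn (fun x => |f x - A|) I := (hi.sub (hconst A)).abs
  have hKnn : 0 ≤ K := le_trans (integral_nonneg fun x => abs_nonneg _) hK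
  have key1 : |c - A| * ℓ ≤ K := by
    have h1 : c - A = (1 / ℓ) * ∫ x in I, (c - f x) := by
      rw [hA]
      unfold avgIoc
      rw [integral_sub (hconst c) hi, setIntegral_const, measureReal_def, hvol, smul_eq_mul, ← hI]
      field_simp
    have h2 : |c - A| ≤ (1 / ℓ) * ∫ x in I, |f x - c| := by
      rw [h1, abs_mul, abs_of_pos (by positivity : (0:ℝ) < 1 / ℓ)]
      refine mul_le_mul_of_nonneg_left ?_ (by positivity)
      calc |∫ x in I, (c - f x)| ≤ ∫ x in I, |c - f x| := by
            simpa [Real.norm_eq_abs] using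
              norm_integral_le_integral_norm (μ := volume.restrict I) (fun x => c - f x)
        _ = ∫ x in I, |f x - c| := by
            congr 1
            funext x
            exact abs_sub_comm c (f x)
    calc |c - A| * ℓ ≤ ((1 / ℓ) * ∫ x in I, |f x - c|) * ℓ :=
          mul_le_mul_of_nonneg_right h2 hℓ.le
      _ = ∫ x in I, |f x - c| := by field_simp
      _ ≤ K := hK
  have key2 : ∫ x in I, |f x - A| ≤ 2 * K := by
    have hmono : ∫ x in I, |f x - A| ≤ ∫ x in I, (|f x - c| + |c - A|) := by
      refine setIntegral_mono_on hicA (hic.add (hconst _)) (by rw [hI]; exact measurableSet_Ioc)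
        fun x _ => abs_sub_le (f x) c A
    have hadd : ∫ x in I, (|f x - c| + |c - A|) = (∫ x in I, |f x - c|) + |c - A| * ℓ := by
      rw [integral_add hic (hconst _), setIntegral_const, measureReal_def, hvol, smul_eq_mul, mul_comm]
    linarith
  unfold oscIoc
  rw [← hA, ← hI]
  calc (1 / ℓ) * ∫ x in I, |f x - A| ≤ (1 / ℓ) * (2 * K) :=
        mul_le_mul_of_nonneg_left key2 (by positivity)
    _ = 2 * K / ℓ := by field_simp

lemma oscIoc_le_of_subset (f : ℝ → ℝ) (a ℓ b L : ℝ) (hℓ : 0 < ℓ) (hL : 0 < L)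
    (hsub : Set.Ioc a (a + ℓ) ⊆ Set.Ioc b (b + L))
    (hi : IntegrableOn f (Set.Ioc b (b + L))) :
    oscIoc f a ℓ ≤ 2 * (L * oscIoc f b L) / ℓ := by
  refine oscIoc_le_of_bound f a ℓ (avgIoc f b L) _ hℓ (hi.mono_set hsub) ?_
  have hconst : IntegrableOn (fun _ => avgIoc f b L) (Set.Ioc b (b + L)) :=
    integrableOn_const measure_Ioc_lt_top.ne
  have hic : IntegrableOn (fun x => |f x - avgIoc f b L|) (Set.Ioc b (b + L)) :=
    (hi.sub hconst).abs
  calc ∫ x in Set.Ioc a (a + ℓ), |f x - avgIoc f b L|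
      ≤ ∫ x in Set.Ioc b (b + L), |f x - avgIoc f b L| :=
        setIntegral_mono_set hic (Filter.Eventually.of_forall fun x => abs_nonneg _)
          (HasSubset.Subset.eventuallyLE hsub)
    _ = L * oscIoc f b L := by
        unfold oscIoc
        field_simp

lemma integral_two_periods {g : ℝ → ℝ} {T : ℝ} (hT : 0 < T) (hg : Function.Periodic g T)
    (hi : ∀ a b : ℝ, IntervalIntegrable g volume a b) (b : ℝ) :
    ∫ x in Set.Ioc b (b + 2 * T), g x = 2 * ∫ x in Set.Ioc 0 T, g x := by
  rw [← intervalIntegral.integral_of_le (by linarith : b ≤ b + 2 * T),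
    ← intervalIntegral.integral_of_le hT.le]
  have h1 : ∫ x in b..(b + T), g x = ∫ x in (0:ℝ)..(0 + T), g x := hg.intervalIntegral_add_eq b 0
  have h2 : ∫ x in (b + T)..((b + T) + T), g x = ∫ x in (0:ℝ)..(0 + T), g x :=
    hg.intervalIntegral_add_eq (b + T) 0
  have h3 := intervalIntegral.integral_add_adjacent_intervals (hi b (b + T)) (hi (b + T) (b + T + T))
  have e : b + 2 * T = b + T + T := by ring
  rw [e, ← h3, h1, h2, zero_add]
  ring

lemma dyadic_reduce {f : ℝ → ℝ} (hf : Function.Periodic f (2 * π)) (n : ℕ) (j : ℤ) :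
    ∃ k : ℕ, k < 2 ^ n ∧
      oscIoc f ((j : ℝ) * (2 * π / 2 ^ n)) (2 * π / 2 ^ n) =
        oscIoc f (2 * π * k / 2 ^ n) (2 * π / 2 ^ n) := by
  have h2n : (0:ℤ) < 2 ^ n := by positivity
  set q : ℤ := j / 2 ^ n with hq
  set r : ℤ := j % 2 ^ n with hr
  have h0 : 0 ≤ r := Int.emod_nonneg j (by positivity)
  have h1 : r < 2 ^ n := Int.emod_lt_of_pos j h2n
  refine ⟨r.toNat, ?_, ?_⟩
  · have : (r.toNat : ℤ) < 2 ^ n := by rwa [Int.toNat_of_nonneg h0]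
    exact_mod_cast this
  · have hqr : (2:ℤ) ^ n * q + r = j := Int.mul_ediv_add_emod j (2 ^ n)
    have hjr : (j : ℝ) = 2 ^ n * q + r := by exact_mod_cast hqr.symm
    have hrt : ((r.toNat : ℕ) : ℝ) = (r : ℝ) := by
      rw [show ((r.toNat : ℕ) : ℝ) = ((r.toNat : ℤ) : ℝ) by push_cast; ring,
        Int.toNat_of_nonneg h0]
    have e : (j : ℝ) * (2 * π / 2 ^ n) = 2 * π * (r.toNat : ℕ) / 2 ^ n + q * (2 * π) := by
      rw [hrt, hjr]
      have : ((2:ℝ) ^ n) ≠ 0 := by positivity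
      field_simp
      ring
    rw [e, oscIoc_shift hf _ _ (by positivity) q]

lemma arith_final {h ℓ d X : ℝ} (hℓ : 0 < ℓ) (hd : 0 < d) (hX : 0 ≤ X)
    (hhd : h * d ≤ 2 * ℓ) : 2 * (h * X) / ℓ ≤ 4 / d * X := by
  rw [div_le_iff₀ hℓ, div_mul_eq_mul_div, div_mul_eq_mul_div, le_div_iff₀ hd]
  nlinarith [mul_nonneg hX (sub_nonneg.2 hhd)]

lemma key_bound (δ : ℝ) (hδ : δ ∈ Set.Ioo (0:ℝ) 1) (hd : 0 < dd δ)
    (φ : ℝ → ℝ) (hper : Function.Periodic φ (2 * π))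
    (hii : ∀ a b : ℝ, IntervalIntegrable φ volume a b)
    (a ℓ : ℝ) (hℓ : 0 < ℓ) (hℓ2 : ℓ ≤ 2 * π) :
    ∃ (n : ℕ) (k : ℕ), k < 2 ^ n ∧
      (oscIoc φ a ℓ ≤ 4 / dd δ * oscIoc φ (2 * π * k / 2 ^ n) (2 * π / 2 ^ n) ∨
       oscIoc φ a ℓ ≤ 4 / dd δ *
         oscIoc (fun x => φ (x - 2 * π * δ)) (2 * π * k / 2 ^ n) (2 * π / 2 ^ n)) := by
  set d := dd δ with hdd'
  by_cases hcase : 2 * π * d ≤ ℓ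
  · -- large arc: compare with the full circle D_0^0
    refine ⟨0, 0, by norm_num, Or.inl ?_⟩
    set c := avgIoc φ 0 (2 * π) with hc
    set m : ℤ := ⌊a / (2 * π)⌋ with hm
    set b : ℝ := (m : ℝ) * (2 * π) with hb
    have hba : b ≤ a := by
      rw [hb, ← le_div_iff₀ two_pi_pos]
      exact Int.floor_le _
    have hab : a < b + 2 * π := by
      have h1 : a < ((m : ℝ) + 1) * (2 * π) := by
        rw [hm]
        exact (div_lt_iff₀ two_pi_pos).1 (Int.lt_floor_add_one _)
      have h2 : ((m : ℝ) + 1) * (2 * π) = (m : ℝ) * (2 * π) + 2 * π := by ring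
      rw [hb]
      linarith
    have hsub : Set.Ioc a (a + ℓ) ⊆ Set.Ioc b (b + 2 * (2 * π)) := fun x hx => by
      constructor
      · linarith [hx.1]
      · linarith [hx.2]
    have hgper : Function.Periodic (fun x => |φ x - c|) (2 * π) := fun x => by
      simp only []
      rw [hper x]
    have hgint : ∀ s t : ℝ, IntervalIntegrable (fun x => |φ x - c|) volume s t := fun s t =>
      ((hii s t).sub intervalIntegrable_const).abs
    have hbig : IntegrableOn (fun x => |φ x - c|) (Set.Ioc b (b + 2 * (2 * π))) :=
      (hgint b (b + 2 * (2 * π))).1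
    have hosc0 : 0 ≤ oscIoc φ 0 (2 * π) := oscIoc_nonneg _ _ _ (by positivity)
    have hK : ∫ x in Set.Ioc a (a + ℓ), |φ x - c| ≤ 2 * (2 * π * oscIoc φ 0 (2 * π)) := by
      calc ∫ x in Set.Ioc a (a + ℓ), |φ x - c|
          ≤ ∫ x in Set.Ioc b (b + 2 * (2 * π)), |φ x - c| :=
            setIntegral_mono_set hbig (Filter.Eventually.of_forall fun x => abs_nonneg _)
              (HasSubset.Subset.eventuallyLE hsub)
        _ = 2 * ∫ x in Set.Ioc 0 (2 * π), |φ x - c| :=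
            integral_two_periods two_pi_pos hgper hgint b
        _ = 2 * (2 * π * oscIoc φ 0 (2 * π)) := by
            unfold oscIoc
            rw [← hc]
            have h2π : (2 * π) ≠ 0 := by positivity
            rw [zero_add]
            field_simp
      -- done
    have hmain := oscIoc_le_of_bound φ a ℓ c (2 * (2 * π * oscIoc φ 0 (2 * π))) hℓ
      (hii a (a + ℓ)).1 hK
    have hfin : 2 * (2 * (2 * π * oscIoc φ 0 (2 * π))) / ℓ ≤ 4 / d * oscIoc φ 0 (2 * π) := by
      have := arith_final (h := 4 * π) hℓ hd hosc0 (by nlinarith [two_pi_pos] : 4 * π * d ≤ 2 * ℓ)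
      calc 2 * (2 * (2 * π * oscIoc φ 0 (2 * π))) / ℓ
          = 2 * (4 * π * oscIoc φ 0 (2 * π)) / ℓ := by ring_nf
        _ ≤ 4 / d * oscIoc φ 0 (2 * π) := this
    have heq : oscIoc φ (2 * π * ((0:ℕ):ℝ) / 2 ^ (0:ℕ)) (2 * π / 2 ^ (0:ℕ)) =
        oscIoc φ 0 (2 * π) := by norm_num
    rw [heq]
    linarith
  · -- small arc
    push_neg at hcase
    have hex : ∃ N : ℕ, 2 * π * d / 2 ^ N ≤ ℓ := by
      obtain ⟨n₀, hn₀⟩ := pow_unbounded_of_one_lt (2 * π * d / ℓ) (by norm_num : (1:ℝ) < 2)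
      exact ⟨n₀, by rw [div_le_iff₀ (by positivity)]; nlinarith [(div_lt_iff₀ hℓ).1 hn₀]⟩
    set N := Nat.find hex with hN
    have hN0 : N ≠ 0 := by
      intro h0
      have := Nat.find_spec hex
      rw [← hN, h0] at this
      simp at this
      linarith
    set n := N - 1 with hn'
    have hnN : n < N := Nat.sub_lt (Nat.pos_of_ne_zero hN0) one_pos
    have hn1 : ℓ < 2 * π * d / 2 ^ n := lt_of_not_ge (Nat.find_min hex hnN)
    have hn2 : 2 * π * d / 2 ^ (n + 1) ≤ ℓ := by
      have : n + 1 = N := by omega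
      rw [this]
      exact Nat.find_spec hex
    set h : ℝ := 2 * π / 2 ^ n with hh'
    have hh : 0 < h := by rw [hh']; positivity
    have hhd : h * d ≤ 2 * ℓ := by
      rw [hh']
      have h2 : (0:ℝ) < 2 ^ (n+1) := by positivity
      rw [div_le_iff₀ h2] at hn2
      rw [div_mul_eq_mul_div, div_le_iff₀ (by positivity : (0:ℝ) < 2 ^ n)]
      rw [pow_succ] at hn2
      nlinarith
    set j1 : ℤ := ⌊a / h⌋ with hj1
    set j2 : ℤ := ⌊(a + 2 * π * δ) / h⌋ with hj2
    set g1 : ℝ := (j1 : ℝ) * h with hg1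
    set g2 : ℝ := (j2 : ℝ) * h - 2 * π * δ with hg2
    have hg1a : g1 ≤ a := by
      rw [hg1, ← le_div_iff₀ hh]
      exact Int.floor_le _
    have ha1 : a < g1 + h := by
      have h1 : a < ((j1 : ℝ) + 1) * h := by
        rw [hj1]
        exact (div_lt_iff₀ hh).1 (Int.lt_floor_add_one _)
      have h2 : ((j1 : ℝ) + 1) * h = (j1 : ℝ) * h + h := by ring
      rw [hg1]
      linarith
    have hg2a : g2 ≤ a := by
      have : (j2 : ℝ) ≤ (a + 2 * π * δ) / h := Int.floor_le _
      rw [hg2]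
      rw [le_div_iff₀ hh] at this
      linarith
    have ha2 : a < g2 + h := by
      have h1 : a + 2 * π * δ < ((j2 : ℝ) + 1) * h := by
        rw [hj2]
        exact (div_lt_iff₀ hh).1 (Int.lt_floor_add_one _)
      have h2 : ((j2 : ℝ) + 1) * h = (j2 : ℝ) * h + h := by ring
      rw [hg2]
      linarith
    by_cases hc1 : a + ℓ ≤ g1 + h
    · -- standard dyadic interval
      have hsub : Set.Ioc a (a + ℓ) ⊆ Set.Ioc g1 (g1 + h) := fun x hx =>
        ⟨by linarith [hx.1], by linarith [hx.2]⟩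
      have hcomp := oscIoc_le_of_subset φ a ℓ g1 h hℓ hh hsub (hii g1 (g1 + h)).1
      obtain ⟨k, hk, heq⟩ := dyadic_reduce hper n j1
      refine ⟨n, k, hk, Or.inl ?_⟩
      rw [← hh'] at heq
      rw [hg1] at hcomp
      rw [heq] at hcomp
      have hosc0 : 0 ≤ oscIoc φ (2 * π * k / 2 ^ n) (2 * π / 2 ^ n) :=
        oscIoc_nonneg _ _ _ (by positivity)
      calc oscIoc φ a ℓ ≤ 2 * (h * oscIoc φ (2 * π * k / 2 ^ n) (2 * π / 2 ^ n)) / ℓ := hcomp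
        _ ≤ 4 / d * oscIoc φ (2 * π * k / 2 ^ n) (2 * π / 2 ^ n) :=
            arith_final hℓ hd hosc0 hhd
    · by_cases hc2 : a + ℓ ≤ g2 + h
      · -- shifted dyadic interval
        have hsub : Set.Ioc a (a + ℓ) ⊆ Set.Ioc g2 (g2 + h) := fun x hx =>
          ⟨by linarith [hx.1], by linarith [hx.2]⟩
        have hcomp := oscIoc_le_of_subset φ a ℓ g2 h hℓ hh hsub (hii g2 (g2 + h)).1
        set ψ : ℝ → ℝ := fun x => φ (x - 2 * π * δ) with hψ
        have hψper : Function.Periodic ψ (2 * π) := fun x => by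
          rw [hψ]
          simp only []
          rw [show x + 2 * π - 2 * π * δ = (x - 2 * π * δ) + 2 * π by ring, hper]
        have hg2eq : oscIoc φ g2 h = oscIoc ψ ((j2 : ℝ) * h) h := by
          rw [hψ, oscIoc_comp_sub φ ((j2 : ℝ) * h) h (2 * π * δ) hh.le, hg2]
        obtain ⟨k, hk, heq⟩ := dyadic_reduce hψper n j2
        rw [← hh'] at heq
        refine ⟨n, k, hk, Or.inr ?_⟩
        rw [hg2eq, heq] at hcomp
        have hosc0 : 0 ≤ oscIoc ψ (2 * π * k / 2 ^ n) (2 * π / 2 ^ n) :=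
          oscIoc_nonneg _ _ _ (by positivity)
        calc oscIoc φ a ℓ ≤ 2 * (h * oscIoc ψ (2 * π * k / 2 ^ n) (2 * π / 2 ^ n)) / ℓ := hcomp
          _ ≤ 4 / d * oscIoc ψ (2 * π * k / 2 ^ n) (2 * π / 2 ^ n) :=
              arith_final hℓ hd hosc0 hhd
      · -- impossible: two grid points inside a short arc
        exfalso
        push_neg at hc1 hc2
        set p : ℝ := g1 + h with hp
        set q : ℝ := g2 + h with hq
        have hple : |p - q| < ℓ := by
          rw [abs_lt]
          constructor <;> nlinarith
        have hpq : p - q = 2 * π * (δ - ((j2 - j1 : ℤ) : ℝ) / 2 ^ n) := by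
          rw [hp, hq, hg1, hg2, hh']
          push_cast
          field_simp
          ring
        have hddle := dd_le δ n (j2 - j1)
        rw [← hdd'] at hddle
        have habs : 2 * π * d / 2 ^ n ≤ |p - q| := by
          rw [hpq, abs_mul, abs_of_pos two_pi_pos]
          rw [div_le_iff₀ (by positivity : (0:ℝ) < 2 ^ n)]
          have := mul_le_mul_of_nonneg_left hddle (by positivity : (0:ℝ) ≤ 2 * π)
          nlinarith
        linarith

lemma dyadic_le_bmoNorm (f : ℝ → ℝ) (n k : ℕ) (hk : k < 2 ^ n) :
    ENNReal.ofReal (oscIoc f (2 * π * k / 2 ^ n) (2 * π / 2 ^ n)) ≤ dyadicBmoNorm f := by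
  unfold dyadicBmoNorm
  exact le_iSup_of_le n (le_iSup_of_le k (le_iSup_of_le hk le_rfl))

/-- **Corollary 2.3.** For `δ ∈ (0,1)` with `d(δ) > 0`,
`BMO(𝕋) = BMO_𝒟(𝕋) ∩ BMO_{𝒟^δ}(𝕋)` with equivalent norms: for every 2π-periodic
`φ ∈ L¹(𝕋)`,
`max {‖φ‖_{BMO_𝒟}, ‖φ(· - 2πδ)‖_{BMO_𝒟}} ≤ ‖φ‖_{BMO} ≤ (4/d(δ)) · max {‖φ‖_{BMO_𝒟}, ‖φ(· - 2πδ)‖_{BMO_𝒟}}`;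
in particular `‖φ‖_{BMO(𝕋)}` is finite iff both dyadic norms are finite. -/
theorem bmo_eq_inter_dyadic (δ : ℝ) (hδ : δ ∈ Set.Ioo (0 : ℝ) 1) (hd : 0 < dd δ)
    (φ : ℝ → ℝ) (hper : Function.Periodic φ (2 * π))
    (hint : IntegrableOn φ (Set.Ioc 0 (2 * π))) :
    max (dyadicBmoNorm φ) (dyadicBmoNorm fun x => φ (x - 2 * π * δ)) ≤ bmoNorm φ ∧
    bmoNorm φ ≤ ENNReal.ofReal (4 / dd δ) *
      max (dyadicBmoNorm φ) (dyadicBmoNorm fun x => φ (x - 2 * π * δ)) ∧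
    (bmoNorm φ < ⊤ ↔
      dyadicBmoNorm φ < ⊤ ∧ dyadicBmoNorm (fun x => φ (x - 2 * π * δ)) < ⊤) := by
  have hii : ∀ a b : ℝ, IntervalIntegrable φ volume a b :=
    periodic_intervalIntegrable two_pi_pos hper
      ((intervalIntegrable_iff_integrableOn_Ioc_of_le (by positivity)).2 hint)
  have harc : ∀ n : ℕ, 0 < 2 * π / 2 ^ n ∧ 2 * π / 2 ^ n ≤ 2 * π := fun n => by
    constructor
    · positivity
    · apply div_le_self (by positivity)
      calc (1:ℝ) = 2 ^ 0 := by norm_num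
        _ ≤ 2 ^ n := by
          apply pow_le_pow_right₀ (by norm_num) (Nat.zero_le n)
  have hlow : max (dyadicBmoNorm φ) (dyadicBmoNorm fun x => φ (x - 2 * π * δ)) ≤ bmoNorm φ := by
    apply max_le
    · unfold dyadicBmoNorm bmoNorm
      refine iSup_le fun n => iSup_le fun k => iSup_le fun hk => ?_
      exact le_iSup_of_le (2 * π * k / 2 ^ n) (le_iSup_of_le (2 * π / 2 ^ n)
        (le_iSup_of_le (harc n).1 (le_iSup_of_le (harc n).2 le_rfl)))
    · unfold dyadicBmoNorm bmoNorm
      refine iSup_le fun n => iSup_le fun k => iSup_le fun hk => ?_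
      rw [oscIoc_comp_sub φ _ _ (2 * π * δ) (harc n).1.le]
      exact le_iSup_of_le (2 * π * k / 2 ^ n - 2 * π * δ) (le_iSup_of_le (2 * π / 2 ^ n)
        (le_iSup_of_le (harc n).1 (le_iSup_of_le (harc n).2 le_rfl)))
  have h4d : (0:ℝ) ≤ 4 / dd δ := div_nonneg (by norm_num) hd.le
  have hup : bmoNorm φ ≤ ENNReal.ofReal (4 / dd δ) *
      max (dyadicBmoNorm φ) (dyadicBmoNorm fun x => φ (x - 2 * π * δ)) := by
    unfold bmoNorm
    refine iSup_le fun a => iSup_le fun ℓ => iSup_le fun hℓ => iSup_le fun hℓ2 => ?_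
    obtain ⟨n, k, hk, hcase⟩ := key_bound δ hδ hd φ hper hii a ℓ hℓ hℓ2
    rcases hcase with hle | hle
    · calc ENNReal.ofReal (oscIoc φ a ℓ)
          ≤ ENNReal.ofReal (4 / dd δ * oscIoc φ (2 * π * k / 2 ^ n) (2 * π / 2 ^ n)) :=
            ENNReal.ofReal_le_ofReal hle
        _ = ENNReal.ofReal (4 / dd δ) *
            ENNReal.ofReal (oscIoc φ (2 * π * k / 2 ^ n) (2 * π / 2 ^ n)) :=
            ENNReal.ofReal_mul h4d
        _ ≤ ENNReal.ofReal (4 / dd δ) *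
            max (dyadicBmoNorm φ) (dyadicBmoNorm fun x => φ (x - 2 * π * δ)) := by
            exact mul_le_mul_right (le_trans (dyadic_le_bmoNorm φ n k hk) (le_max_left _ _)) _
    · calc ENNReal.ofReal (oscIoc φ a ℓ)
          ≤ ENNReal.ofReal (4 / dd δ *
              oscIoc (fun x => φ (x - 2 * π * δ)) (2 * π * k / 2 ^ n) (2 * π / 2 ^ n)) :=
            ENNReal.ofReal_le_ofReal hle
        _ = ENNReal.ofReal (4 / dd δ) *
            ENNReal.ofReal (oscIoc (fun x => φ (x - 2 * π * δ)) (2 * π * k / 2 ^ n)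
              (2 * π / 2 ^ n)) := ENNReal.ofReal_mul h4d
        _ ≤ ENNReal.ofReal (4 / dd δ) *
            max (dyadicBmoNorm φ) (dyadicBmoNorm fun x => φ (x - 2 * π * δ)) := by
            exact mul_le_mul_right
              (le_trans (dyadic_le_bmoNorm (fun x => φ (x - 2 * π * δ)) n k hk)
                (le_max_right _ _)) _
  refine ⟨hlow, hup, ?_, ?_⟩
  · intro hfin
    exact ⟨lt_of_le_of_lt (le_trans (le_max_left _ _) hlow) hfin,
      lt_of_le_of_lt (le_trans (le_max_right _ _) hlow) hfin⟩
  · rintro ⟨h1, h2⟩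
    exact lt_of_le_of_lt hup (ENNReal.mul_lt_top ENNReal.ofReal_lt_top (max_lt h1 h2))
end

section
/- Let δ ∈ (0,1) with d(δ) > 0 and let φ ∈ L¹(𝕋). Then for every t ∈ 𝕋, φ^#(t) ≤ (4/d(δ))·max{φ^#_𝒟(t), φ^#_{𝒟^δ}(t)}; that is, the sharp maximal function of φ is pointwise dominated by (4/d(δ)) times the maximum of the two dyadic sharp maximal functions associated with the dyadic filtration and its translate by 2πδ. -/
open Real MeasureTheory Set ENNReal

noncomputable def sharpFn (φ : ℝ → ℝ) (t : AddCircle (2 * π)) : ℝ≥0∞ :=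
  ⨆ (a : ℝ) (ℓ : ℝ) (_ : 0 < ℓ) (_ : ℓ ≤ 2 * π) (_ : t ∈ arcSet a ℓ),
    ENNReal.ofReal (oscIoc φ a ℓ)

noncomputable def sharpDyadic (φ : ℝ → ℝ) (δ : ℝ) (t : AddCircle (2 * π)) : ℝ≥0∞ :=
  ⨆ (n : ℕ) (k : ℕ) (_ : k < 2 ^ n)
    (_ : t ∈ arcSet (2 * π * δ + 2 * π * k / 2 ^ n) (2 * π / 2 ^ n)),
    ENNReal.ofReal (oscIoc φ (2 * π * δ + 2 * π * k / 2 ^ n) (2 * π / 2 ^ n))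

/- ## Auxiliary lemmas -/

lemma two_pi_pos' : (0:ℝ) < 2 * π := by positivity

lemma dd_le_abs (x : ℝ) (n : ℕ) (k : ℤ) : dd x ≤ |2 ^ n * x - k| := by
  have h := dd_le x n k
  have h2 : (2:ℝ)^n * |x - k / 2^n| = |2^n * x - k| := by
    rw [← abs_of_pos (show (0:ℝ) < 2^n by positivity), ← abs_mul]
    congr 1
    field_simp
    rw [abs_of_pos (show (0:ℝ) < 2^n by positivity)]
  rwa [h2] at h

lemma setIntegral_Ioc_shift (f : ℝ → ℝ) {a b : ℝ} (c : ℝ) (hab : a ≤ b) :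
    ∫ x in Set.Ioc (a + c) (b + c), f x = ∫ x in Set.Ioc a b, f (x + c) := by
  rw [← intervalIntegral.integral_of_le (by linarith), ← intervalIntegral.integral_of_le hab,
    intervalIntegral.integral_comp_add_right]

lemma integral_Ioc_periodic_shift {f : ℝ → ℝ} (hf : Function.Periodic f (2*π)) {a b : ℝ}
    (hab : a ≤ b) (m : ℤ) :
    ∫ x in Set.Ioc (a + m*(2*π)) (b + m*(2*π)), f x = ∫ x in Set.Ioc a b, f x := by
  rw [setIntegral_Ioc_shift f _ hab]
  have : (fun x => f (x + m*(2*π))) = f := funext fun x => (hf.int_mul m) x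
  rw [this]

lemma integrableOn_Ioc_periodic_shift {f : ℝ → ℝ} (hf : Function.Periodic f (2*π))
    {a b : ℝ} (hab : a ≤ b) (h : IntegrableOn f (Set.Ioc a b)) (m : ℤ) :
    IntegrableOn f (Set.Ioc (a + m*(2*π)) (b + m*(2*π))) := by
  have h1 : IntervalIntegrable f volume a b :=
    (intervalIntegrable_iff_integrableOn_Ioc_of_le hab).2 h
  have h2 := h1.comp_add_right (-(m*(2*π)))
  have h3 : (fun x => f (x + -(m*(2*π)))) = f := funext fun x => by
    rw [← sub_eq_add_neg]; exact hf.sub_int_mul_eq m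
  rw [h3, sub_neg_eq_add, sub_neg_eq_add] at h2
  exact (intervalIntegrable_iff_integrableOn_Ioc_of_le (by linarith)).1 h2

/-- Integrability on the big interval `(-2π, 6π]`. -/
lemma integrable_big {φ : ℝ → ℝ} (hper : Function.Periodic φ (2 * π))
    (hint : IntegrableOn φ (Set.Ioc 0 (2 * π))) :
    IntegrableOn φ (Set.Ioc (-(2*π)) (3*(2*π))) := by
  have hπ := Real.pi_pos
  have h : ∀ m : ℤ, IntegrableOn φ (Set.Ioc (0 + m*(2*π)) (2*π + m*(2*π))) := fun m =>
    integrableOn_Ioc_periodic_shift hper (by linarith) hint m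
  have h1 := h (-1); have h2 := h 0; have h3 := h 1; have h4 := h 2
  have hu := ((h1.union h2).union h3).union h4
  refine hu.mono_set fun x hx => ?_
  simp only [Set.mem_Ioc, Set.mem_union] at hx ⊢
  push_cast at hx ⊢
  obtain ⟨hxl, hxr⟩ := hx
  rcases le_or_gt x 0 with h0 | h0
  · exact Or.inl (Or.inl (Or.inl ⟨by linarith, by linarith⟩))
  · rcases le_or_gt x (2*π) with h1' | h1'
    · exact Or.inl (Or.inl (Or.inr ⟨by linarith, by linarith⟩))
    · rcases le_or_gt x (2*π + 2*π) with h2' | h2'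
      · exact Or.inl (Or.inr ⟨by linarith, by linarith⟩)
      · exact Or.inr ⟨by linarith, by linarith⟩

lemma coe_add_int_mul (x : ℝ) (m : ℤ) :
    ((x + m*(2*π) : ℝ) : AddCircle (2*π)) = (x : AddCircle (2*π)) := by
  have h : ((m*(2*π) : ℝ) : AddCircle (2*π)) = 0 := by
    rw [AddCircle.coe_eq_zero_iff]
    exact ⟨m, by simp [zsmul_eq_mul]⟩
  rw [AddCircle.coe_add, h, add_zero]

lemma arcSet_shift (a ℓ : ℝ) (m : ℤ) : arcSet (a + m*(2*π)) ℓ = arcSet a ℓ := by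
  unfold arcSet
  ext t
  simp only [Set.mem_image, Set.mem_Ioc]
  constructor
  · rintro ⟨x, hx, rfl⟩
    refine ⟨x - m*(2*π), ⟨by linarith [hx.1], by linarith [hx.2]⟩, ?_⟩
    rw [← coe_add_int_mul (x - m*(2*π)) m]; ring_nf
  · rintro ⟨x, hx, rfl⟩
    exact ⟨x + m*(2*π), ⟨by linarith [hx.1], by linarith [hx.2]⟩, coe_add_int_mul x m⟩

lemma avgIoc_shift {φ : ℝ → ℝ} (hper : Function.Periodic φ (2 * π)) (a : ℝ) {ℓ : ℝ}
    (hl : 0 ≤ ℓ) (m : ℤ) : avgIoc φ (a + m*(2*π)) ℓ = avgIoc φ a ℓ := by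
  unfold avgIoc
  congr 1
  have he : a + m*(2*π) + ℓ = (a + ℓ) + m*(2*π) := by ring
  rw [he, integral_Ioc_periodic_shift hper (by linarith) m]

lemma oscIoc_shift_s6 {φ : ℝ → ℝ} (hper : Function.Periodic φ (2 * π)) (a : ℝ) {ℓ : ℝ}
    (hl : 0 ≤ ℓ) (m : ℤ) : oscIoc φ (a + m*(2*π)) ℓ = oscIoc φ a ℓ := by
  unfold oscIoc
  rw [avgIoc_shift hper a hl m]
  congr 1
  have he : a + m*(2*π) + ℓ = (a + ℓ) + m*(2*π) := by ring
  have hper' : Function.Periodic (fun x => |φ x - avgIoc φ a ℓ|) (2*π) :=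
    fun x => by simp [hper x]
  rw [he, integral_Ioc_periodic_shift hper' (by linarith) m]

lemma oscIoc_nonneg_s6 (φ : ℝ → ℝ) (a : ℝ) {ℓ : ℝ} (hl : 0 < ℓ) : 0 ≤ oscIoc φ a ℓ := by
  unfold oscIoc
  exact mul_nonneg (by positivity) (integral_nonneg fun x => abs_nonneg _)

/-- Oscillation comparison for nested intervals. -/
lemma osc_le_osc (φ : ℝ → ℝ) {a ℓ L G : ℝ} (hl : 0 < ℓ) (hG : 0 < G)
    (hsub : Set.Ioc a (a + ℓ) ⊆ Set.Ioc L (L + G))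
    (hint : IntegrableOn φ (Set.Ioc L (L + G))) :
    oscIoc φ a ℓ ≤ (2 * G / ℓ) * oscIoc φ L G := by
  have hμI : (volume (Set.Ioc a (a + ℓ))).toReal = ℓ := by
    rw [Real.volume_Ioc, add_sub_cancel_left, ENNReal.toReal_ofReal hl.le]
  have hfin : volume (Set.Ioc a (a + ℓ)) < ⊤ := measure_Ioc_lt_top
  have hfinD : volume (Set.Ioc L (L + G)) < ⊤ := measure_Ioc_lt_top
  have hintI : IntegrableOn φ (Set.Ioc a (a + ℓ)) := hint.mono_set hsub
  set c := avgIoc φ L G with hc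
  set b := avgIoc φ a ℓ with hb
  have hconstI : IntegrableOn (fun _ : ℝ => c) (Set.Ioc a (a + ℓ)) :=
    integrableOn_const hfin.ne
  have hconstD : IntegrableOn (fun _ : ℝ => c) (Set.Ioc L (L + G)) :=
    integrableOn_const hfinD.ne
  have hintIc : IntegrableOn (fun x => φ x - c) (Set.Ioc a (a + ℓ)) := hintI.sub hconstI
  have habs_int : IntegrableOn (fun x => |φ x - c|) (Set.Ioc L (L + G)) :=
    (hint.sub hconstD).abs
  have habs_intI : IntegrableOn (fun x => |φ x - c|) (Set.Ioc a (a + ℓ)) :=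
    habs_int.mono_set hsub
  have h2 : b - c = (1/ℓ) * ∫ x in Set.Ioc a (a + ℓ), (φ x - c) := by
    rw [integral_sub hintI hconstI, setIntegral_const, measureReal_def, hμI, smul_eq_mul, hb]
    unfold avgIoc
    field_simp
  have h3 : |b - c| ≤ (1/ℓ) * ∫ x in Set.Ioc a (a + ℓ), |φ x - c| := by
    rw [h2, abs_mul, abs_of_pos (show (0:ℝ) < 1/ℓ by positivity)]
    have := norm_integral_le_integral_norm (μ := volume.restrict (Set.Ioc a (a + ℓ)))
      (fun x => φ x - c)
    simp only [Real.norm_eq_abs] at this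
    gcongr
  have hbig : ∫ x in Set.Ioc a (a + ℓ), |φ x - b| ≤
      2 * ∫ x in Set.Ioc a (a + ℓ), |φ x - c| := by
    have hpt : ∀ x ∈ Set.Ioc a (a + ℓ), |φ x - b| ≤ |φ x - c| + |b - c| := fun x _ => by
      have h := abs_sub_le (φ x) c b
      have h' : |c - b| = |b - c| := abs_sub_comm c b
      linarith
    have hconstb : IntegrableOn (fun _ : ℝ => b) (Set.Ioc a (a + ℓ)) :=
      integrableOn_const hfin.ne
    have hconstbc : IntegrableOn (fun _ : ℝ => |b - c|) (Set.Ioc a (a + ℓ)) :=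
      integrableOn_const hfin.ne
    have habsb : IntegrableOn (fun x => |φ x - b|) (Set.Ioc a (a + ℓ)) := by
      have := (hintI.sub hconstb).abs
      simpa [Pi.sub_apply, IntegrableOn] using this
    have hsum : IntegrableOn (fun x => |φ x - c| + |b - c|) (Set.Ioc a (a + ℓ)) :=
      habs_intI.add hconstbc
    have hmono := setIntegral_mono_on habsb hsum measurableSet_Ioc hpt
    rw [integral_add habs_intI hconstbc, setIntegral_const,
      measureReal_def, hμI, smul_eq_mul] at hmono
    have h4 : ℓ * |b - c| ≤ ∫ x in Set.Ioc a (a + ℓ), |φ x - c| := by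
      have := mul_le_mul_of_nonneg_left h3 hl.le
      rw [← mul_assoc, mul_one_div, div_self (ne_of_gt hl), one_mul] at this
      exact this
    linarith
  have hmono2 : ∫ x in Set.Ioc a (a + ℓ), |φ x - c| ≤ ∫ x in Set.Ioc L (L + G), |φ x - c| :=
    setIntegral_mono_set habs_int (Filter.Eventually.of_forall fun x => abs_nonneg _)
      (HasSubset.Subset.eventuallyLE hsub)
  show (1/ℓ) * ∫ x in Set.Ioc a (a + ℓ), |φ x - b| ≤
      (2 * G / ℓ) * ((1/G) * ∫ x in Set.Ioc L (L + G), |φ x - c|)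
  have hEq : (2 * G / ℓ) * ((1/G) * ∫ x in Set.Ioc L (L + G), |φ x - c|) =
      (1/ℓ) * (2 * ∫ x in Set.Ioc L (L + G), |φ x - c|) := by
    field_simp
  rw [hEq]
  have : ∫ x in Set.Ioc a (a + ℓ), |φ x - b| ≤ 2 * ∫ x in Set.Ioc L (L + G), |φ x - c| := by
    linarith
  exact mul_le_mul_of_nonneg_left this (by positivity)

lemma integral_Ioc_add_period_eq {f : ℝ → ℝ} (hf : Function.Periodic f (2*π)) (a : ℝ) :
    ∫ x in Set.Ioc a (a + 2*π), f x = ∫ x in Set.Ioc 0 (0 + 2*π), f x := by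
  have hπ := Real.pi_pos
  have h := hf.intervalIntegral_add_eq a 0
  rwa [intervalIntegral.integral_of_le (by linarith),
    intervalIntegral.integral_of_le (by linarith)] at h

lemma oscIoc_period (φ : ℝ → ℝ) (hper : Function.Periodic φ (2 * π)) (a : ℝ) :
    oscIoc φ a (2*π) = oscIoc φ 0 (2*π) := by
  have havg : avgIoc φ a (2*π) = avgIoc φ 0 (2*π) := by
    unfold avgIoc
    rw [integral_Ioc_add_period_eq hper a]
  unfold oscIoc
  rw [havg]
  congr 1
  have hper' : Function.Periodic (fun x => |φ x - avgIoc φ 0 (2*π)|) (2*π) :=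
    fun x => by simp [hper x]
  exact integral_Ioc_add_period_eq hper' a


/-- Reduction step: an interval contained in a (possibly shifted-out-of-range) grid interval. -/
lemma reduce (δ : ℝ) {φ : ℝ → ℝ} (hper : Function.Periodic φ (2 * π))
    (hbig : IntegrableOn φ (Set.Ioc (-(2*π)) (3*(2*π))))
    (σ : ℝ) {a ℓ : ℝ} (n : ℕ) (i : ℤ) (hl : 0 < ℓ)
    (hsub : Set.Ioc a (a + ℓ) ⊆
      Set.Ioc (2*π*σ + i*(2*π/2^n)) (2*π*σ + i*(2*π/2^n) + 2*π/2^n))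
    (hLlo : -(2*π) ≤ 2*π*σ + i*(2*π/2^n))
    (hLhi : 2*π*σ + i*(2*π/2^n) + 2*π/2^n ≤ 3*(2*π))
    (hC : 2*(2*π/2^n)/ℓ ≤ 4 / dd δ)
    (hd4 : 0 ≤ 4 / dd δ) :
    ∃ k : ℕ, k < 2^n ∧
      arcSet a ℓ ⊆ arcSet (2*π*σ + 2*π*k/2^n) (2*π/2^n) ∧
      oscIoc φ a ℓ ≤ (4 / dd δ) * oscIoc φ (2*π*σ + 2*π*k/2^n) (2*π/2^n) := by
  have hπ := Real.pi_pos
  have hGpos : (0:ℝ) < 2*π/2^n := by positivity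
  set m : ℤ := i / 2^n with hm
  set k : ℕ := (i % (2^n : ℤ)).toNat with hk
  have h2n : (0:ℤ) < 2^n := by positivity
  have hkZ : (k : ℤ) = i % 2^n := Int.toNat_of_nonneg (Int.emod_nonneg i (ne_of_gt h2n))
  have hkn : k < 2^n := by
    have h1 := Int.emod_lt_of_pos i h2n
    rw [← hkZ] at h1
    exact_mod_cast h1
  have hi : (2:ℤ)^n * m + (k:ℤ) = i := by rw [hkZ, hm]; exact Int.mul_ediv_add_emod i (2^n)
  have hiR : (2:ℝ)^n * (m:ℝ) + (k:ℝ) = (i:ℝ) := by exact_mod_cast hi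
  have hLA : 2*π*σ + (i:ℝ)*(2*π/2^n) = (2*π*σ + 2*π*(k:ℝ)/2^n) + (m:ℝ)*(2*π) := by
    rw [← hiR]; field_simp; ring
  refine ⟨k, hkn, ?_, ?_⟩
  · have harc : arcSet (2*π*σ + (i:ℝ)*(2*π/2^n)) (2*π/2^n) =
        arcSet (2*π*σ + 2*π*(k:ℝ)/2^n) (2*π/2^n) := by
      rw [hLA]; exact arcSet_shift _ _ m
    intro x hx
    rw [← harc]
    exact Set.image_mono hsub hx
  · have hoscL : oscIoc φ (2*π*σ + (i:ℝ)*(2*π/2^n)) (2*π/2^n) =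
        oscIoc φ (2*π*σ + 2*π*(k:ℝ)/2^n) (2*π/2^n) := by
      rw [hLA]; exact oscIoc_shift_s6 hper _ hGpos.le m
    have hintD : IntegrableOn φ
        (Set.Ioc (2*π*σ + i*(2*π/2^n)) (2*π*σ + i*(2*π/2^n) + 2*π/2^n)) :=
      hbig.mono_set (Set.Ioc_subset_Ioc hLlo hLhi)
    have h1 := osc_le_osc φ hl hGpos hsub hintD
    rw [hoscL] at h1
    exact h1.trans (mul_le_mul_of_nonneg_right hC (oscIoc_nonneg_s6 φ _ hGpos))

/-- The key covering lemma. -/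
lemma key (δ : ℝ) (hδ : δ ∈ Set.Ioo (0 : ℝ) 1) (hd : 0 < dd δ)
    (φ : ℝ → ℝ) (hper : Function.Periodic φ (2 * π))
    (hint : IntegrableOn φ (Set.Ioc 0 (2 * π)))
    {a ℓ : ℝ} (hl : 0 < ℓ) (hl2 : ℓ ≤ 2 * π) :
    ∃ (σ : ℝ), (σ = 0 ∨ σ = δ) ∧ ∃ (n k : ℕ), k < 2 ^ n ∧
      arcSet a ℓ ⊆ arcSet (2*π*σ + 2*π*k/2^n) (2*π/2^n) ∧
      oscIoc φ a ℓ ≤ (4 / dd δ) * oscIoc φ (2*π*σ + 2*π*k/2^n) (2*π/2^n) := by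
  have hπ := Real.pi_pos
  have hdδ : dd δ ≤ δ := by
    have := dd_le δ 0 0
    simpa [abs_of_pos hδ.1] using this
  have hd1 : dd δ < 1 := lt_of_le_of_lt hdδ hδ.2
  have hd4 : (0:ℝ) ≤ 4 / dd δ := by positivity
  have hbig := integrable_big hper hint
  set m0 : ℤ := -⌊a / (2*π)⌋ with hm0
  have ha'mem : 0 ≤ a + m0*(2*π) ∧ a + m0*(2*π) < 2*π := by
    have h1 : (⌊a / (2*π)⌋:ℝ) * (2*π) ≤ a :=
      (le_div_iff₀ two_pi_pos').mp (Int.floor_le (a / (2*π)))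
    have h2 : a < ((⌊a / (2*π)⌋:ℝ) + 1) * (2*π) :=
      (div_lt_iff₀ two_pi_pos').mp (Int.lt_floor_add_one (a / (2*π)))
    constructor <;> (rw [hm0]; push_cast; nlinarith)
  set a' : ℝ := a + m0*(2*π) with ha'
  have harc : arcSet a' ℓ = arcSet a ℓ := arcSet_shift a ℓ m0
  have hosc : oscIoc φ a' ℓ = oscIoc φ a ℓ := oscIoc_shift_s6 hper a hl.le m0
  clear_value a'
  clear ha' hm0
  clear_value m0
  by_cases hcase : ℓ ≤ dd δ * (2*π)
  · -- small interval: genuine dyadic argument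
    obtain ⟨n, hn2, hn1⟩ : ∃ n : ℕ, dd δ*(2*π)/2^(n+1) < ℓ ∧ ℓ ≤ dd δ*(2*π)/2^n := by
      have hex : ∃ n : ℕ, dd δ*(2*π)/2^(n+1) < ℓ := by
        obtain ⟨N, hN⟩ := pow_unbounded_of_one_lt (R := ℝ) (dd δ*(2*π)/ℓ) one_lt_two
        refine ⟨N, ?_⟩
        rw [div_lt_iff₀ hl] at hN
        rw [div_lt_iff₀ (by positivity)]
        have hp := pow_pos (show (0:ℝ) < 2 by norm_num) N
        calc dd δ*(2*π) < 2^N * ℓ := hN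
          _ ≤ ℓ * 2^(N+1) := by rw [pow_succ]; nlinarith [hl.le]
      refine ⟨Nat.find hex, Nat.find_spec hex, ?_⟩
      rcases Nat.eq_zero_or_pos (Nat.find hex) with h0 | h0
      · rw [h0]; simpa using hcase
      · have hh := Nat.find_min hex (Nat.sub_lt h0 one_pos)
        push_neg at hh
        have he : Nat.find hex - 1 + 1 = Nat.find hex := by omega
        rwa [he] at hh
    have hGpos : (0:ℝ) < 2*π/2^n := by positivity
    have h2n1 : (1:ℝ) ≤ 2^n := by exact_mod_cast Nat.one_le_two_pow (n := n)
    have hGle : 2*π/2^n ≤ 2*π := div_le_self two_pi_pos'.le h2n1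
    have hdG : ℓ ≤ dd δ * (2*π/2^n) := by
      calc ℓ ≤ dd δ*(2*π)/2^n := hn1
        _ = dd δ * (2*π/2^n) := by ring
    have hG2 : dd δ * (2*π/2^n) / 2 < ℓ := by
      calc dd δ * (2*π/2^n)/2 = dd δ*(2*π)/2^(n+1) := by rw [pow_succ]; ring
        _ < ℓ := hn2
    have hC : 2*(2*π/2^n)/ℓ ≤ 4 / dd δ := by
      rw [div_le_div_iff₀ hl hd]; nlinarith [hGpos]
    have hℓG : ℓ ≤ 2*π/2^n := hdG.trans (by nlinarith [hGpos])
    set j : ℤ := ⌊a' / (2*π/2^n)⌋ with hj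
    have hj1 : (j:ℝ) * (2*π/2^n) ≤ a' :=
      (le_div_iff₀ hGpos).mp (Int.floor_le (a' / (2*π/2^n)))
    have hj2 : a' < ((j:ℝ) + 1) * (2*π/2^n) := by
      have h := Int.lt_floor_add_one (a' / (2*π/2^n))
      rw [div_lt_iff₀ hGpos] at h
      exact h
    have hj0 : (0:ℝ) ≤ (j:ℝ) * (2*π/2^n) := by
      have : (0:ℤ) ≤ j := Int.floor_nonneg.2 (div_nonneg ha'mem.1 hGpos.le)
      have : (0:ℝ) ≤ (j:ℝ) := by exact_mod_cast this
      positivity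
    have hG2n : (2*π/2^n) * 2^n = 2*π := by field_simp
    clear_value j
    rcases le_or_gt (a' + ℓ) (((j:ℝ)+1) * (2*π/2^n)) with hca | hca
    · -- contained in a plain dyadic interval
      refine ⟨0, Or.inl rfl, n, ?_⟩
      have hsub : Set.Ioc a' (a' + ℓ) ⊆
          Set.Ioc (2*π*0 + j*(2*π/2^n)) (2*π*0 + j*(2*π/2^n) + 2*π/2^n) := by
        apply Set.Ioc_subset_Ioc
        · linarith [hj1]
        · linarith [hca]
      obtain ⟨k, hk, h1, h2⟩ := reduce δ hper hbig 0 n j hl hsub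
        (by linarith [hj0, hπ]) (by linarith [hj1, ha'mem.2, hGle]) hC hd4
      refine ⟨k, hk, ?_, ?_⟩
      · rw [← harc]; exact h1
      · rw [← hosc]; exact h2
    · -- crosses a dyadic grid point: use the shifted grid
      set g : ℝ := ((j:ℝ)+1) * (2*π/2^n) with hg
      set i : ℤ := ⌈(g - 2*π*δ)/(2*π/2^n)⌉ - 1 with hi
      have hceil1 : (g - 2*π*δ)/(2*π/2^n) ≤ (i:ℝ) + 1 := by
        rw [hi]; push_cast
        linarith [Int.le_ceil ((g - 2*π*δ)/(2*π/2^n))]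
      have hceil2 : (i:ℝ) < (g - 2*π*δ)/(2*π/2^n) := by
        rw [hi]; push_cast
        linarith [Int.ceil_lt_add_one ((g - 2*π*δ)/(2*π/2^n))]
      clear_value g i
      have hLg : 2*π*δ + (i:ℝ)*(2*π/2^n) < g := by
        rw [lt_div_iff₀ hGpos] at hceil2; linarith
      have hgL : g ≤ 2*π*δ + (i:ℝ)*(2*π/2^n) + 2*π/2^n := by
        rw [div_le_iff₀ hGpos] at hceil1; linarith
      -- grid separation
      have hgl2 : g - (2*π*δ + (i:ℝ)*(2*π/2^n)) =
          (2*π/2^n) * (((j:ℝ)+1-(i:ℝ)) - 2^n*δ) := by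
        rw [hg]; field_simp; ring
      have hgr2 : (2*π*δ + (i:ℝ)*(2*π/2^n) + 2*π/2^n) - g =
          (2*π/2^n) * (2^n*δ - ((j:ℝ)-(i:ℝ))) := by
        rw [hg]; field_simp; ring
      have ht1 : 0 < ((j:ℝ)+1-(i:ℝ)) - 2^n*δ := by
        have hX : 0 < (2*π/2^n) * (((j:ℝ)+1-(i:ℝ)) - 2^n*δ) := by linarith [hLg, hgl2]
        have h := div_pos hX hGpos
        rwa [mul_div_cancel_left₀ _ (ne_of_gt hGpos)] at h
      have ht2 : 0 ≤ 2^n*δ - ((j:ℝ)-(i:ℝ)) := by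
        have hX : 0 ≤ (2*π/2^n) * (2^n*δ - ((j:ℝ)-(i:ℝ))) := by linarith [hgL, hgr2]
        have h := div_nonneg hX hGpos.le
        rwa [mul_div_cancel_left₀ _ (ne_of_gt hGpos)] at h
      have gd1 : dd δ * (2*π/2^n) ≤ g - (2*π*δ + (i:ℝ)*(2*π/2^n)) := by
        have hb := dd_le_abs δ n (j + 1 - i)
        have : |2^n*δ - ((j:ℝ)+1-(i:ℝ))| = ((j:ℝ)+1-(i:ℝ)) - 2^n*δ := by
          rw [abs_of_neg (by linarith)]; ring
        rw [show ((j + 1 - i : ℤ):ℝ) = ((j:ℝ)+1-(i:ℝ)) by push_cast; ring, this] at hb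
        rw [hgl2, mul_comm]
        exact mul_le_mul_of_nonneg_left hb hGpos.le
      have gd2 : dd δ * (2*π/2^n) ≤ (2*π*δ + (i:ℝ)*(2*π/2^n) + 2*π/2^n) - g := by
        have hb := dd_le_abs δ n (j - i)
        have : |2^n*δ - ((j:ℝ)-(i:ℝ))| = 2^n*δ - ((j:ℝ)-(i:ℝ)) := abs_of_nonneg ht2
        rw [show ((j - i : ℤ):ℝ) = ((j:ℝ)-(i:ℝ)) by push_cast; ring, this] at hb
        rw [hgr2, mul_comm]
        exact mul_le_mul_of_nonneg_left hb hGpos.le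
      refine ⟨δ, Or.inr rfl, n, ?_⟩
      have hsub : Set.Ioc a' (a' + ℓ) ⊆
          Set.Ioc (2*π*δ + i*(2*π/2^n)) (2*π*δ + i*(2*π/2^n) + 2*π/2^n) := by
        apply Set.Ioc_subset_Ioc
        · linarith [gd1, hdG, hca]
        · linarith [gd2, hdG, hj2]
      obtain ⟨k, hk, h1, h2⟩ := reduce δ hper hbig δ n i hl hsub
        (by linarith [hgL, hj2, ha'mem.1, hGle])
        (by linarith [hLg, hj1, ha'mem.2, hGle, hg.ge, hg.le]) hC hd4
      refine ⟨k, hk, ?_, ?_⟩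
      · rw [← harc]; exact h1
      · rw [← hosc]; exact h2
  · -- big interval: compare with the whole circle
    push_neg at hcase
    refine ⟨0, Or.inl rfl, 0, 0, by norm_num, ?_, ?_⟩
    · have huniv : arcSet (2*π*0 + 2*π*((0:ℕ):ℝ)/2^(0:ℕ)) (2*π/2^(0:ℕ)) = Set.univ := by
        unfold arcSet
        haveI : Fact ((0:ℝ) < 2*π) := ⟨two_pi_pos'⟩
        have h0 : (2*π*0 + 2*π*((0:ℕ):ℝ)/2^(0:ℕ) : ℝ) = 0 := by norm_num
        have h1 : (2*π*0 + 2*π*((0:ℕ):ℝ)/2^(0:ℕ) + 2*π/2^(0:ℕ) : ℝ) = 0 + 2*π := by norm_num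
        rw [h0]  -- may fail; fallback below
        rw [show (0 + 2*π/2^(0:ℕ) : ℝ) = 0 + 2*π by norm_num]
        exact AddCircle.coe_image_Ioc_eq (p := 2*π) (a := 0)
      rw [huniv]; exact Set.subset_univ _
    · have hsub : Set.Ioc a' (a' + ℓ) ⊆ Set.Ioc a' (a' + 2*π) :=
        Set.Ioc_subset_Ioc_right (by linarith)
      have hintD : IntegrableOn φ (Set.Ioc a' (a' + 2*π)) :=
        hbig.mono_set (Set.Ioc_subset_Ioc (by linarith [ha'mem.1]) (by linarith [ha'mem.2]))
      have h1 := osc_le_osc φ hl two_pi_pos' hsub hintD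
      rw [oscIoc_period φ hper a'] at h1
      have hC : 2*(2*π)/ℓ ≤ 4 / dd δ := by
        rw [div_le_div_iff₀ hl hd]; nlinarith
      have h2 : oscIoc φ a ℓ ≤ (4 / dd δ) * oscIoc φ 0 (2*π) := by
        rw [← hosc]
        exact h1.trans (mul_le_mul_of_nonneg_right hC (oscIoc_nonneg_s6 φ _ two_pi_pos'))
      have e1 : (2*π*0 + 2*π*((0:ℕ):ℝ)/2^(0:ℕ) : ℝ) = 0 := by norm_num
      have e2 : (2*π/2^(0:ℕ) : ℝ) = 2*π := by norm_num
      rw [e1, e2]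
      exact h2

/-- **Remark 2.2.** For `δ ∈ (0,1)` with `d(δ) > 0` and 2π-periodic `φ ∈ L¹(𝕋)`,
the sharp maximal function is pointwise dominated:
`φ^#(t) ≤ (4/d(δ)) · max {φ^#_𝒟(t), φ^#_{𝒟^δ}(t)}` for every `t ∈ 𝕋`. -/
theorem sharp_le_max_dyadic_sharp (δ : ℝ) (hδ : δ ∈ Set.Ioo (0 : ℝ) 1) (hd : 0 < dd δ)
    (φ : ℝ → ℝ) (hper : Function.Periodic φ (2 * π))
    (hint : IntegrableOn φ (Set.Ioc 0 (2 * π))) :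
    ∀ t : AddCircle (2 * π),
      sharpFn φ t ≤ ENNReal.ofReal (4 / dd δ) *
        max (sharpDyadic φ 0 t) (sharpDyadic φ δ t) := by
  intro t
  rw [sharpFn]
  refine iSup_le fun a => iSup_le fun ℓ => iSup_le fun hl => iSup_le fun hl2 =>
    iSup_le fun ht => ?_
  obtain ⟨σ, hσ, n, k, hk, hsub, hosc⟩ := key δ hδ hd φ hper hint hl hl2
  have hd4 : (0:ℝ) ≤ 4 / dd δ := by positivity
  have h0 : ENNReal.ofReal (oscIoc φ a ℓ) ≤
      ENNReal.ofReal (4 / dd δ) *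
        ENNReal.ofReal (oscIoc φ (2*π*σ + 2*π*k/2^n) (2*π/2^n)) := by
    rw [← ENNReal.ofReal_mul hd4]
    exact ENNReal.ofReal_le_ofReal hosc
  refine h0.trans ?_
  have ht' : t ∈ arcSet (2*π*σ + 2*π*k/2^n) (2*π/2^n) := hsub ht
  have h1 : ENNReal.ofReal (oscIoc φ (2*π*σ + 2*π*k/2^n) (2*π/2^n)) ≤ sharpDyadic φ σ t := by
    rw [sharpDyadic]
    exact le_iSup_of_le n (le_iSup_of_le k (le_iSup_of_le hk (le_iSup_of_le ht' le_rfl)))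
  refine mul_le_mul_right ?_ _
  rcases hσ with rfl | rfl
  · exact h1.trans (le_max_left _ _)
  · exact h1.trans (le_max_right _ _)
end

section
/- The set {δ ∈ (0,1) : d(δ) > 0} is dense in the interval (0,1). -/
lemma dd_third (N : ℕ) (a : ℤ) :
    (1:ℝ) / (3 * 2 ^ N) ≤ dd ((3 * a + 1) / (3 * 2 ^ N)) := by
  have hne : {y : ℝ | ∃ (n : ℕ) (k : ℤ),
      y = 2 ^ n * |(3 * (a:ℝ) + 1) / (3 * 2 ^ N) - k / 2 ^ n|}.Nonempty :=
    ⟨_, 0, 0, rfl⟩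
  apply le_csInf hne
  rintro y ⟨n, k, rfl⟩
  set m : ℤ := 2 ^ n * (3 * a + 1) - 3 * 2 ^ N * k with hm
  have hm0 : m ≠ 0 := by
    intro h
    have h3 : (3:ℤ) ∣ 2 ^ n * (3 * a + 1) := ⟨2 ^ N * k, by linarith [hm ▸ h]⟩
    have hp : Prime (3:ℤ) := by norm_num
    rcases hp.dvd_mul.1 h3 with h | h
    · have := hp.dvd_of_dvd_pow h
      norm_num at this
    · omega
  have h1 : (1:ℝ) ≤ |(m:ℝ)| := by
    rw [← Int.cast_abs]
    exact_mod_cast Int.one_le_abs hm0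
  have hden : (0:ℝ) < 3 * 2 ^ N := by positivity
  have key : (3 * (a:ℝ) + 1) / (3 * 2 ^ N) - (k:ℝ) / 2 ^ n = (m:ℝ) / (3 * 2 ^ N * 2 ^ n) := by
    rw [hm]; push_cast; field_simp
  rw [key, abs_div, abs_of_pos (by positivity : (0:ℝ) < 3 * 2 ^ N * 2 ^ n)]
  have heq : 2 ^ n * (|(m:ℝ)| / (3 * 2 ^ N * 2 ^ n)) = |(m:ℝ)| / (3 * 2 ^ N) := by
    field_simp
  rw [heq, div_le_div_iff₀ hden hden]
  nlinarith

/-- **Remark 2.3 (first half).** The set `{δ ∈ (0,1) : d(δ) > 0}` is dense in `(0,1)`. -/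
theorem dense_pos_dd : Set.Ioo (0 : ℝ) 1 ⊆ closure {δ ∈ Set.Ioo (0 : ℝ) 1 | 0 < dd δ} := by
  intro x hx
  rw [Metric.mem_closure_iff]
  intro ε hε
  obtain ⟨N, hN⟩ : ∃ N : ℕ, (1:ℝ) / 2 ^ N < ε := by
    obtain ⟨N, hN⟩ := pow_unbounded_of_one_lt (1/ε) (by norm_num : (1:ℝ) < 2)
    exact ⟨N, by rw [div_lt_iff₀ (by positivity)]; rw [div_lt_iff₀ hε] at hN; linarith⟩
  set a : ℤ := ⌊2 ^ N * x⌋ with ha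
  have h2N : (0:ℝ) < 2 ^ N := by positivity
  have hfl : (a:ℝ) ≤ 2 ^ N * x := Int.floor_le _
  have hfu : 2 ^ N * x < a + 1 := Int.lt_floor_add_one _
  have ha0 : 0 ≤ a := Int.floor_nonneg.2 (mul_nonneg h2N.le hx.1.le)
  have ha0' : (0:ℝ) ≤ (a:ℝ) := by exact_mod_cast ha0
  have ha1 : a + 1 ≤ 2 ^ N := by
    have h : (2:ℝ) ^ N * x < ((2 ^ N : ℤ) : ℝ) := by push_cast; nlinarith [hx.2]
    have := Int.floor_lt.2 h
    omega
  have ha1' : ((a:ℝ) + 1) ≤ 2 ^ N := by exact_mod_cast ha1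
  set y : ℝ := (3 * (a:ℝ) + 1) / (3 * 2 ^ N) with hy
  have key2 : 2 ^ N * y = (a:ℝ) + 1/3 := by rw [hy]; field_simp
  have hεN : 1 < 2 ^ N * ε := by rw [div_lt_iff₀ h2N] at hN; linarith
  refine ⟨y, ⟨⟨?_, ?_⟩, ?_⟩, ?_⟩
  · apply div_pos _ (by positivity); linarith
  · rw [div_lt_one (by positivity)]; linarith
  · calc (0:ℝ) < 1 / (3 * 2 ^ N) := by positivity
      _ ≤ dd y := dd_third N a
  · rw [Real.dist_eq, abs_lt]
    constructor
    · have hgt : 2 ^ N * (-ε) < 2 ^ N * (x - y) := by nlinarith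
      have := lt_of_mul_lt_mul_left hgt h2N.le
      linarith
    · have hlt : 2 ^ N * (x - y) < 2 ^ N * ε := by nlinarith
      exact lt_of_mul_lt_mul_left hlt h2N.le
end

section
/- Let m ≥ 1 and let δ₀, δ₁, …, δ_m ∈ (0,1) satisfy d({δ_i}) := min_{i ≠ j} d(δ_i − δ_j) > 0, and set c = 2/d({δ_i}). Then for every arc I of 𝕋 there is at most one index i ∈ {0,1,…,m} such that the shifted dyadic family 𝒟^{δ_i} does not fit I with fit-constant c; equivalently, at least m of the m+1 families 𝒟^{δ_0}, …, 𝒟^{δ_m} fit I with fit-constant c. -/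
open Real MeasureTheory Set ENNReal

/-- `d({δᵢ}) = min_{i ≠ j} d(δᵢ - δⱼ)` for a finite family `δ : Fin (m+1) → ℝ`. -/
noncomputable def dfam {m : ℕ} (δ : Fin (m + 1) → ℝ) : ℝ :=
  sInf {x : ℝ | ∃ i j : Fin (m + 1), i ≠ j ∧ x = dd (δ i - δ j)}

/-- The shifted dyadic family `𝒟^δ` fits the arc `I = (a, a+ℓ]` (mod 2π) with
fit-constant `c`: some shifted dyadic interval `D_n^{δ,k}` contains `I` and has length
at most `c·|I|`. -/
noncomputable def fitsArc (δ c a ℓ : ℝ) : Prop :=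
  ∃ n k : ℕ, k < 2 ^ n ∧
    arcSet a ℓ ⊆ arcSet (2 * π * δ + 2 * π * k / 2 ^ n) (2 * π / 2 ^ n) ∧
    2 * π / 2 ^ n ≤ c * ℓ

lemma dd_nonneg (x : ℝ) : 0 ≤ dd x := by
  apply Real.sInf_nonneg
  rintro y ⟨n, k, rfl⟩; positivity

lemma dd_le_half (x : ℝ) : dd x ≤ 1 / 2 := by
  have h := dd_le x 0 (round x)
  calc dd x ≤ 2 ^ 0 * |x - (round x : ℝ) / 2 ^ 0| := h
    _ = |x - round x| := by norm_num
    _ ≤ 1 / 2 := abs_sub_round x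

lemma dfam_le {m : ℕ} (δ : Fin (m + 1) → ℝ) {i j : Fin (m + 1)} (hij : i ≠ j) :
    dfam δ ≤ dd (δ i - δ j) := by
  apply csInf_le
  · exact ⟨0, by rintro y ⟨i, j, -, rfl⟩; exact dd_nonneg _⟩
  · exact ⟨i, j, hij, rfl⟩

/-- If `𝒟^δ` does not fit `(a, a+ℓ]` with constant `c`, and scale `n` satisfies the
length requirement `2π/2^n ≤ cℓ`, then some shifted dyadic grid point of scale `n`
lies strictly inside `(a, a+ℓ)` (as a real number, choosing appropriate `k ∈ ℤ`). -/
lemma grid_point_of_not_fits (d c a ℓ : ℝ) (hℓ : 0 < ℓ) (n : ℕ)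
    (hn : 2 * π / 2 ^ n ≤ c * ℓ) (hfail : ¬ fitsArc d c a ℓ) :
    ∃ k : ℤ, a < 2 * π * d + 2 * π * k / 2 ^ n ∧ 2 * π * d + 2 * π * k / 2 ^ n < a + ℓ := by
  have hπ : (0:ℝ) < π := Real.pi_pos
  have hL : (0:ℝ) < 2 * π / 2 ^ n := by positivity
  set L : ℝ := 2 * π / 2 ^ n with hLdef
  set s : ℝ := a + ℓ with hs
  set k' : ℤ := ⌈(s - 2 * π * d) / L⌉ - 1 with hk'
  have hb1 : 2 * π * d + 2 * π * k' / 2 ^ n < s := by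
    have h1 : (k' : ℝ) < (s - 2 * π * d) / L := by
      rw [hk']
      push_cast
      have := Int.ceil_lt_add_one ((s - 2 * π * d) / L)
      linarith [Int.le_ceil ((s - 2 * π * d) / L)]
    have h1' : (k' : ℝ) * L < s - 2 * π * d := by
      rw [← lt_div_iff₀ hL]; exact h1
    have : 2 * π * k' / 2 ^ n = (k' : ℝ) * L := by rw [hLdef]; ring
    linarith
  have hb2 : s ≤ 2 * π * d + 2 * π * k' / 2 ^ n + L := by
    have h1 : (s - 2 * π * d) / L ≤ (k' : ℝ) + 1 := by
      rw [hk']; push_cast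
      linarith [Int.le_ceil ((s - 2 * π * d) / L)]
    have h1' : s - 2 * π * d ≤ ((k' : ℝ) + 1) * L := by
      rw [← div_le_iff₀ hL]; exact h1
    have : 2 * π * k' / 2 ^ n = (k' : ℝ) * L := by rw [hLdef]; ring
    nlinarith
  refine ⟨k', ?_, hb1⟩
  by_contra hba
  push_neg at hba
  -- then the family fits, contradiction
  apply hfail
  set k : ℕ := (k' % (2 ^ n : ℤ)).toNat with hk
  have h2n : (0:ℤ) < 2 ^ n := by positivity
  have hkz : (k : ℤ) = k' % (2 ^ n : ℤ) := Int.toNat_of_nonneg (Int.emod_nonneg _ (ne_of_gt h2n))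
  have hklt : k < 2 ^ n := by
    have h := Int.emod_lt_of_pos k' h2n
    rw [← hkz] at h
    exact_mod_cast h
  set t : ℤ := k' / (2 ^ n : ℤ) with ht
  have hkt : (2 ^ n : ℤ) * t + (k : ℤ) = k' := by
    rw [hkz, ht]; exact Int.mul_ediv_add_emod k' (2 ^ n)
  set β : ℝ := 2 * π * d + 2 * π * k / 2 ^ n with hβ
  have hβb : 2 * π * d + 2 * π * k' / 2 ^ n = β + 2 * π * t := by
    rw [hβ]
    have : (k' : ℝ) = (2 ^ n : ℝ) * (t : ℝ) + (k : ℝ) := by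
      exact_mod_cast congrArg (fun z : ℤ => (z : ℝ)) hkt.symm
    rw [this]
    field_simp
    ring
  refine ⟨n, k, hklt, ?_, hn⟩
  rintro y ⟨x, hx, rfl⟩
  refine ⟨x - 2 * π * t, ⟨?_, ?_⟩, ?_⟩
  · have : β + 2 * π * t ≤ a := by rw [← hβb]; exact hba
    have hax : a < x := hx.1
    linarith
  · have hxs : x ≤ s := hx.2
    have := hb2
    rw [hβb] at this
    linarith
  · show ((x - 2 * π * (t:ℝ) : ℝ) : AddCircle (2 * π)) = (x : AddCircle (2 * π))
    have h0 : ((2 * π * (t:ℝ) : ℝ) : AddCircle (2 * π)) = 0 := by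
      rw [AddCircle.coe_eq_zero_iff]
      exact ⟨t, by rw [zsmul_eq_mul]; ring⟩
    rw [AddCircle.coe_sub, h0, sub_zero]

/-- For `m ≥ 1` and `δ₀, …, δ_m ∈ (0,1)` with `d({δᵢ}) = min_{i≠j} d(δᵢ - δⱼ) > 0`,
setting `c = 2/d({δᵢ})`, every arc `I` of `𝕋` fails to be fitted with fit-constant `c`
by at most one of the `m+1` shifted dyadic families `𝒟^{δ₀}, …, 𝒟^{δ_m}`. -/
theorem at_most_one_family_fails (m : ℕ) (hm : 1 ≤ m) (δ : Fin (m + 1) → ℝ)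
    (hδ : ∀ i, δ i ∈ Set.Ioo (0 : ℝ) 1) (hd : 0 < dfam δ)
    (a ℓ : ℝ) (hℓ : 0 < ℓ) (hℓ' : ℓ ≤ 2 * π) :
    ∀ i j : Fin (m + 1), ¬ fitsArc (δ i) (2 / dfam δ) a ℓ →
      ¬ fitsArc (δ j) (2 / dfam δ) a ℓ → i = j := by
  have hπ : (0:ℝ) < π := Real.pi_pos
  intro i j hi hj
  by_contra hij
  set d : ℝ := dfam δ with hdd
  set c : ℝ := 2 / d with hc
  have hcpos : 0 < c := by positivity
  -- the scale requirement is satisfiable for some n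
  have hex : ∃ n : ℕ, 2 * π / 2 ^ n ≤ c * ℓ := by
    obtain ⟨n, hn⟩ := pow_unbounded_of_one_lt (2 * π / (c * ℓ)) one_lt_two
    refine ⟨n, ?_⟩
    have h2 : (0:ℝ) < 2 ^ n := by positivity
    rw [div_le_iff₀ h2]
    rw [div_lt_iff₀ (by positivity)] at hn
    linarith
  -- case n = 0 works: every family fits
  by_cases h0 : 2 * π / 2 ^ 0 ≤ c * ℓ
  · apply hi
    refine ⟨0, 0, by norm_num, ?_, h0⟩
    have hu : arcSet (2 * π * δ i + 2 * π * (0:ℕ) / 2 ^ 0) (2 * π / 2 ^ 0) = univ := by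
      haveI : Fact (0 < 2 * π) := ⟨by positivity⟩
      unfold arcSet
      push_cast
      norm_num
    rw [hu]; exact subset_univ _
  -- otherwise take the minimal scale n
  have hn0 : Nat.find hex ≠ 0 := by
    intro h
    apply h0
    have := Nat.find_spec hex
    rwa [h] at this
  set n : ℕ := Nat.find hex with hn
  have hnspec : 2 * π / 2 ^ n ≤ c * ℓ := Nat.find_spec hex
  have hnmin : ¬ (2 * π / 2 ^ (n - 1) ≤ c * ℓ) := Nat.find_min hex (by omega)
  push_neg at hnmin
  -- key inequality: ℓ * 2 ^ n < 2 * π * d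
  have hkey : ℓ * 2 ^ n < 2 * π * d := by
    have h2 : (2:ℝ) ^ n = 2 * 2 ^ (n - 1) := by
      rw [← pow_succ']
      congr 1
      omega
    have hp1 : (0:ℝ) < 2 ^ (n - 1) := by positivity
    have h1 : c * ℓ * 2 ^ (n - 1) < 2 * π := by
      rw [lt_div_iff₀ hp1] at hnmin
      exact hnmin
    have h2' : c * ℓ * 2 ^ (n - 1) = ℓ * 2 ^ n / d := by
      rw [hc, h2]; field_simp
    rw [h2', div_lt_iff₀ hd] at h1
    linarith
  obtain ⟨ki, hki1, hki2⟩ := grid_point_of_not_fits (δ i) c a ℓ hℓ n hnspec hi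
  obtain ⟨kj, hkj1, hkj2⟩ := grid_point_of_not_fits (δ j) c a ℓ hℓ n hnspec hj
  -- the two grid points are within ℓ of each other
  have hdist : |2 * π * δ i + 2 * π * ki / 2 ^ n - (2 * π * δ j + 2 * π * kj / 2 ^ n)| < ℓ := by
    rw [abs_lt]; constructor <;> linarith
  have hrw : 2 * π * δ i + 2 * π * ki / 2 ^ n - (2 * π * δ j + 2 * π * kj / 2 ^ n)
      = 2 * π * ((δ i - δ j) - ((kj - ki : ℤ) : ℝ) / 2 ^ n) := by
    push_cast
    ring
  have habs : 2 ^ n * |(δ i - δ j) - ((kj - ki : ℤ) : ℝ) / 2 ^ n| < d := by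
    rw [hrw] at hdist
    rw [abs_mul, abs_of_pos (by positivity : (0:ℝ) < 2 * π)] at hdist
    have h2 : (0:ℝ) < 2 ^ n := by positivity
    nlinarith [abs_nonneg ((δ i - δ j) - ((kj - ki : ℤ) : ℝ) / 2 ^ n)]
  have hle : d ≤ dd (δ i - δ j) := dfam_le δ hij
  have := dd_le (δ i - δ j) n (kj - ki)
  linarith
end

section
/- Let δ ∈ (0,1) with d(δ) > 0 and let φ ∈ L¹(𝕋). Then for every t ∈ 𝕋 and every arc I of 𝕋 containing t, (1/|I|)∫_I |φ| ≤ (2/d(δ))·max{M_𝒟 φ(t), M_{𝒟^δ} φ(t)}; that is, the (uncentered) Hardy–Littlewood maximal function of φ is pointwise dominated by (2/d(δ)) times the maximum of the two dyadic maximal functions associated with the dyadic filtration and its translate by 2πδ. -/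
open Real MeasureTheory Set ENNReal

/-- The average of `|φ|` over the arc `I = (a, a + ℓ]` (mod 2π):
`(1/|I|) ∫_I |φ|`. -/
noncomputable def avgAbs (φ : ℝ → ℝ) (a ℓ : ℝ) : ℝ :=
  (1 / ℓ) * ∫ x in Set.Ioc a (a + ℓ), |φ x|

/-- The dyadic maximal function with respect to the dyadic filtration translated by
`2πδ`: `M_{𝒟^δ} φ(t) = sup {(1/|D|) ∫_D |φ| : D = D_n^{δ,k} ∋ t}`.
Taking `δ = 0` gives the usual dyadic maximal function `M_𝒟 φ`. -/
noncomputable def dyadicMax (φ : ℝ → ℝ) (δ : ℝ) (t : AddCircle (2 * π)) : ℝ≥0∞ :=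
  ⨆ (n : ℕ) (k : ℕ) (_ : k < 2 ^ n)
    (_ : t ∈ arcSet (2 * π * δ + 2 * π * k / 2 ^ n) (2 * π / 2 ^ n)),
    ENNReal.ofReal (avgAbs φ (2 * π * δ + 2 * π * k / 2 ^ n) (2 * π / 2 ^ n))

lemma aux_II {φ : ℝ → ℝ} (hper : Function.Periodic φ (2 * π))
    (hint : IntegrableOn φ (Set.Ioc 0 (2 * π))) :
    ∀ a b : ℝ, IntervalIntegrable φ volume a b := by
  have h2π : (0:ℝ) < 2 * π := by positivity
  have h1 : IntervalIntegrable φ volume 0 (2 * π) :=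
    (intervalIntegrable_iff_integrableOn_Ioc_of_le h2π.le).2 hint
  have key : ∀ j : ℤ, IntervalIntegrable φ volume (2*π*j) (2*π*(j+1)) := by
    intro j
    have h := h1.comp_sub_right (2*π*j)
    have hf : (fun x => φ (x - 2*π*(j:ℝ))) = φ := by
      funext x
      have := hper.sub_int_mul_eq (x := x) j
      rw [← this]; ring_nf
    rw [hf] at h
    convert h using 1 <;> push_cast <;> ring
  have chain : ∀ (j : ℤ) (n : ℕ), IntervalIntegrable φ volume (2*π*(j:ℝ)) (2*π*((j:ℝ)+(n:ℝ))) := by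
    intro j n
    induction n with
    | zero => simp
    | succ n ih =>
      have k2 := key (j + n)
      have hcast : ((j + (n:ℤ) : ℤ):ℝ) = (j:ℝ) + (n:ℝ) := by push_cast; ring
      rw [hcast] at k2
      have h2 := ih.trans k2
      have hE : 2*π*((j:ℝ)+((n+1:ℕ):ℝ)) = 2*π*(((j:ℝ)+(n:ℝ))+1) := by push_cast; ring
      rw [hE]
      exact h2
  have main : ∀ a b : ℝ, a ≤ b → IntervalIntegrable φ volume a b := by
    intro a b hab
    set j : ℤ := ⌊a / (2*π)⌋ with hj
    have ha : 2*π*(j:ℝ) ≤ a := by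
      have := Int.floor_le (a / (2*π))
      have h2 := (le_div_iff₀ h2π).1 this
      linarith [h2]
    obtain ⟨n, hn⟩ := exists_nat_gt ((b - 2*π*(j:ℝ)) / (2*π))
    have hb : b ≤ 2*π*((j:ℝ) + n) := by
      have := (div_lt_iff₀ h2π).1 hn
      nlinarith
    have hsub : Set.uIcc a b ⊆ Set.uIcc (2*π*(j:ℝ)) (2*π*((j:ℝ)+(n:ℝ))) := by
      rw [Set.uIcc_of_le hab, Set.uIcc_of_le (by linarith)]
      exact Set.Icc_subset_Icc ha hb
    exact (chain j n).mono_set hsub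
  intro a b
  rcases le_total a b with hab | hab
  · exact main a b hab
  · exact (main b a hab).symm

lemma aux_shift {φ : ℝ → ℝ} (hper : Function.Periodic φ (2 * π))
    (c s : ℝ) (hs : 0 ≤ s) (q : ℤ) :
    ∫ x in Set.Ioc (c + 2*π*q) (c + 2*π*q + s), |φ x| = ∫ x in Set.Ioc c (c+s), |φ x| := by
  rw [← intervalIntegral.integral_of_le (le_add_of_nonneg_right hs),
      ← intervalIntegral.integral_of_le (le_add_of_nonneg_right hs)]
  have h := intervalIntegral.integral_comp_add_right (a := c) (b := c + s)
    (fun x => |φ x|) (2*π*q)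
  have h2 : ∀ x : ℝ, |φ (x + 2*π*(q:ℝ))| = |φ x| := by
    intro x
    rw [show (2*π*(q:ℝ)) = (q:ℝ)*(2*π) by ring, (hper.int_mul q) x]
  simp only [h2] at h
  rw [show c + 2*π*(q:ℝ) + s = c + s + 2*π*(q:ℝ) by ring]
  exact h.symm

lemma aux_avg_nonneg (φ : ℝ → ℝ) (a ℓ : ℝ) (hl : 0 ≤ ℓ) : 0 ≤ avgAbs φ a ℓ := by
  refine mul_nonneg (by positivity) ?_
  exact setIntegral_nonneg measurableSet_Ioc fun x _ => abs_nonneg _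

lemma aux_avg_mono {φ : ℝ → ℝ} (hII : ∀ a b : ℝ, IntervalIntegrable φ volume a b)
    (a ℓ c s : ℝ) (hl : 0 < ℓ) (hs : 0 < s)
    (hsub : Set.Ioc a (a+ℓ) ⊆ Set.Ioc c (c+s)) :
    avgAbs φ a ℓ ≤ (s/ℓ) * avgAbs φ c s := by
  have hint2 : IntegrableOn (fun x => |φ x|) (Set.Ioc c (c+s)) :=
    (intervalIntegrable_iff_integrableOn_Ioc_of_le (by linarith)).1 (hII c (c+s)).abs
  have hmono : ∫ x in Set.Ioc a (a+ℓ), |φ x| ≤ ∫ x in Set.Ioc c (c+s), |φ x| :=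
    setIntegral_mono_set hint2 (Filter.Eventually.of_forall fun x => abs_nonneg _)
      (HasSubset.Subset.eventuallyLE hsub)
  unfold avgAbs
  calc (1/ℓ) * ∫ x in Set.Ioc a (a+ℓ), |φ x|
      ≤ (1/ℓ) * ∫ x in Set.Ioc c (c+s), |φ x| :=
        mul_le_mul_of_nonneg_left hmono (by positivity)
    _ = (s/ℓ) * ((1/s) * ∫ x in Set.Ioc c (c+s), |φ x|) := by
        field_simp

lemma aux_coe_shift (x : ℝ) (q : ℤ) :
    ((x - 2*π*(q:ℝ) : ℝ) : AddCircle (2*π)) = (x : AddCircle (2*π)) := by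
  have h0 : ((2*π*(q:ℝ) : ℝ) : AddCircle (2*π)) = 0 := by
    rw [AddCircle.coe_eq_zero_iff]
    exact ⟨q, by rw [zsmul_eq_mul]; push_cast; ring⟩
  rw [AddCircle.coe_sub, h0, sub_zero]

/-- **Remark 2.1-type consequence.** For `δ ∈ (0,1)` with `d(δ) > 0` and 2π-periodic
`φ ∈ L¹(𝕋)`: for every `t ∈ 𝕋` and every arc `I ∋ t`,
`(1/|I|) ∫_I |φ| ≤ (2/d(δ)) · max {M_𝒟 φ(t), M_{𝒟^δ} φ(t)}`; i.e. the uncentered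
Hardy–Littlewood maximal function is pointwise dominated by `2/d(δ)` times the
maximum of the two dyadic maximal functions. -/
theorem hl_maximal_le_dyadic_max (δ : ℝ) (hδ : δ ∈ Set.Ioo (0 : ℝ) 1) (hd : 0 < dd δ)
    (φ : ℝ → ℝ) (hper : Function.Periodic φ (2 * π))
    (hint : IntegrableOn φ (Set.Ioc 0 (2 * π))) :
    ∀ (t : AddCircle (2 * π)) (a ℓ : ℝ), 0 < ℓ → ℓ ≤ 2 * π → t ∈ arcSet a ℓ →
      ENNReal.ofReal (avgAbs φ a ℓ) ≤
        ENNReal.ofReal (2 / dd δ) * max (dyadicMax φ 0 t) (dyadicMax φ δ t) := by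
  intro t a ℓ hl hl2 ht
  have h2π : (0:ℝ) < 2 * π := by positivity
  haveI : Fact ((0:ℝ) < 2 * π) := ⟨h2π⟩
  set d := dd δ with hdd
  have hII := aux_II hper hint
  have h2d : (0:ℝ) ≤ 2 / d := by positivity
  -- the bound of any single dyadic average by the dyadic maximal function
  have hbound : ∀ (δ' : ℝ) (m kn : ℕ), kn < 2^m →
      t ∈ arcSet (2*π*δ' + 2*π*(kn:ℝ)/2^m) (2*π/2^m) →
      ENNReal.ofReal (avgAbs φ (2*π*δ' + 2*π*(kn:ℝ)/2^m) (2*π/2^m)) ≤ dyadicMax φ δ' t := by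
    intro δ' m kn hk hmem
    refine le_iSup_of_le m (le_iSup_of_le kn ?_)
    rw [iSup_pos hk, iSup_pos hmem]
  by_cases hbig : 2*π*d < ℓ
  · -- large arc: compare with the whole circle D_0^0
    have hmem0 : t ∈ arcSet 0 (2*π) := by
      have huniv : (fun x : ℝ => (x : AddCircle (2 * π))) '' Set.Ioc 0 (0 + 2*π) = Set.univ :=
        AddCircle.coe_image_Ioc_eq (p := 2*π) (a := 0)
      rw [arcSet, huniv]; trivial
    have hmem : t ∈ arcSet (2*π*0 + 2*π*((0:ℕ):ℝ)/2^(0:ℕ)) (2*π/2^(0:ℕ)) := by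
      have e1 : (2*π*(0:ℝ) + 2*π*((0:ℕ):ℝ)/2^(0:ℕ)) = 0 := by norm_num
      have e2 : (2*π/2^(0:ℕ) : ℝ) = 2*π := by norm_num
      rw [e1, e2]; exact hmem0
    have h0 := hbound 0 0 0 (by norm_num) hmem
    have heq : avgAbs φ (2*π*0 + 2*π*((0:ℕ):ℝ)/2^(0:ℕ)) (2*π/2^(0:ℕ)) = avgAbs φ 0 (2*π) := by
      norm_num
    rw [heq] at h0
    -- average over (a, a+ℓ] ≤ (2π/ℓ) · average over a full period
    have hsub : Set.Ioc a (a+ℓ) ⊆ Set.Ioc a (a + 2*π) := Set.Ioc_subset_Ioc le_rfl (by linarith)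
    have h1 : avgAbs φ a ℓ ≤ (2*π/ℓ) * avgAbs φ a (2*π) :=
      aux_avg_mono hII a ℓ a (2*π) hl h2π hsub
    have habs : Function.Periodic (fun x => |φ x|) (2*π) := fun x => by
      simp [hper x]
    have hfull : avgAbs φ a (2*π) = avgAbs φ 0 (2*π) := by
      unfold avgAbs
      congr 1
      rw [← intervalIntegral.integral_of_le (by linarith),
          ← intervalIntegral.integral_of_le (by linarith)]
      exact habs.intervalIntegral_add_eq a 0
    have hA0 : 0 ≤ avgAbs φ 0 (2*π) := aux_avg_nonneg φ 0 (2*π) h2π.le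
    have hratio : 2*π/ℓ ≤ 2/d := by
      rw [div_le_div_iff₀ hl hd]
      nlinarith
    have h2 : avgAbs φ a ℓ ≤ (2/d) * avgAbs φ 0 (2*π) := by
      rw [hfull] at h1
      calc avgAbs φ a ℓ ≤ (2*π/ℓ) * avgAbs φ 0 (2*π) := h1
        _ ≤ (2/d) * avgAbs φ 0 (2*π) := mul_le_mul_of_nonneg_right hratio hA0
    calc ENNReal.ofReal (avgAbs φ a ℓ) ≤ ENNReal.ofReal ((2/d) * avgAbs φ 0 (2*π)) :=
          ENNReal.ofReal_le_ofReal h2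
      _ = ENNReal.ofReal (2/d) * ENNReal.ofReal (avgAbs φ 0 (2*π)) :=
          ENNReal.ofReal_mul h2d
      _ ≤ ENNReal.ofReal (2/d) * dyadicMax φ 0 t := mul_le_mul_right h0 _
      _ ≤ ENNReal.ofReal (2/d) * max (dyadicMax φ 0 t) (dyadicMax φ δ t) :=
          mul_le_mul_right (le_max_left _ _) _
  · -- small arc: find the right dyadic scale m
    push_neg at hbig
    have hex : ∃ n : ℕ, 2*π*d < ℓ * 2^n := by
      obtain ⟨n, hn⟩ := pow_unbounded_of_one_lt ((2*π*d)/ℓ) (one_lt_two (α := ℝ))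
      exact ⟨n, by rw [div_lt_iff₀ hl] at hn; linarith [hn]⟩
    obtain ⟨n₀, hn₀, hmin⟩ : ∃ n₀ : ℕ, (2*π*d < ℓ * 2^n₀) ∧ ∀ j < n₀, ¬(2*π*d < ℓ * 2^j) :=
      ⟨Nat.find hex, Nat.find_spec hex, fun j hj => Nat.find_min hex hj⟩
    have hn₀pos : 0 < n₀ := by
      rcases Nat.eq_zero_or_pos n₀ with h | h
      · exfalso
        rw [h] at hn₀
        norm_num at hn₀
        linarith
      · exact h
    set m := n₀ - 1 with hmdef
    have hm1 : m + 1 = n₀ := Nat.succ_pred_eq_of_pos hn₀pos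
    have hfail : ¬ (2*π*d < ℓ * 2^m) := hmin m (by omega)
    push_neg at hfail
    have hpow : (0:ℝ) < 2^m := by positivity
    set s : ℝ := 2*π/2^m with hsdef
    have hs : 0 < s := by positivity
    have hsd : ℓ ≤ d * s := by
      rw [hsdef, show d * (2*π/(2:ℝ)^m) = (d*(2*π))/2^m by ring, le_div_iff₀ hpow]
      nlinarith [hfail]
    have hspec : 2*π*d < ℓ * 2^(m+1) := by rw [hm1]; exact hn₀
    have hs2 : s / ℓ ≤ 2 / d := by
      rw [div_le_div_iff₀ hl hd, hsdef]
      rw [div_mul_eq_mul_div, div_le_iff₀ hpow]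
      have h2m : (2:ℝ)^(m+1) = 2 * 2^m := by ring
      rw [h2m] at hspec
      nlinarith [hspec]
    -- the common finishing argument, given a grid with no point inside (a, a+ℓ)
    have finish : ∀ δ' : ℝ, (∀ k : ℤ, 2*π*δ' + (k:ℝ)*s ∉ Set.Ioo a (a+ℓ)) →
        ENNReal.ofReal (avgAbs φ a ℓ) ≤ ENNReal.ofReal (2/d) * dyadicMax φ δ' t := by
      intro δ' hno
      set k : ℤ := ⌊(a - 2*π*δ')/s⌋ with hkdef
      set g : ℝ := 2*π*δ' + (k:ℝ)*s with hgdef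
      have hga : g ≤ a := by
        have := Int.floor_le ((a - 2*π*δ')/s)
        have h2 := (le_div_iff₀ hs).1 this
        rw [hgdef]; linarith
      have hag : a < g + s := by
        have := Int.lt_floor_add_one ((a - 2*π*δ')/s)
        have h2 := (div_lt_iff₀ hs).1 this
        rw [hgdef]; push_cast at h2 ⊢; nlinarith
      have hend : a + ℓ ≤ g + s := by
        by_contra hcon
        push_neg at hcon
        refine hno (k+1) ?_
        constructor
        · push_cast; rw [hgdef] at hag; push_cast at hag; linarith
        · push_cast; rw [hgdef] at hcon; push_cast at hcon; linarith
      have hsub : Set.Ioc a (a+ℓ) ⊆ Set.Ioc g (g+s) := Set.Ioc_subset_Ioc hga hend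
      -- reduce k modulo 2^m
      set q : ℤ := k / (2^m : ℤ) with hqdef
      set r : ℤ := k % (2^m : ℤ) with hrdef
      have hpowz : (0:ℤ) < 2^m := by positivity
      have hqr : (2^m : ℤ) * q + r = k := Int.mul_ediv_add_emod k (2^m)
      have hr0 : 0 ≤ r := Int.emod_nonneg k (by positivity)
      have hrlt : r < 2^m := Int.emod_lt_of_pos k hpowz
      set kn : ℕ := r.toNat with hkndef
      have hknr : (kn : ℤ) = r := Int.toNat_of_nonneg hr0
      have hkn : kn < 2^m := by
        have : (kn : ℤ) < (2^m : ℤ) := by rw [hknr]; exact hrlt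
        exact_mod_cast this
      set aD : ℝ := 2*π*δ' + 2*π*(kn:ℝ)/2^m with haDdef
      have hkreal : (k:ℝ) = 2^m*(q:ℝ) + (kn:ℝ) := by
        have : ((2^m * q + r : ℤ) : ℝ) = (k : ℝ) := by exact_mod_cast congrArg Int.cast hqr
        push_cast at this
        rw [← this]
        push_cast [← hknr]
        ring
      have hg : g = aD + 2*π*(q:ℝ) := by
        rw [hgdef, haDdef, hkreal, hsdef]
        field_simp
        ring
      -- shift the average back to the fundamental domain
      have havg_eq : avgAbs φ g s = avgAbs φ aD s := by
        unfold avgAbs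
        congr 1
        rw [hg, show aD + 2*π*(q:ℝ) + s = aD + 2*π*(q:ℝ) + s from rfl]
        exact aux_shift hper aD s hs.le q
      -- membership of t in the shifted dyadic interval
      obtain ⟨x, hx, hxt⟩ := ht
      have hxg : x ∈ Set.Ioc g (g+s) := hsub hx
      have hmem : t ∈ arcSet aD (2*π/2^m) := by
        refine ⟨x - 2*π*(q:ℝ), ?_, ?_⟩
        · rw [hg] at hxg
          constructor
          · have := hxg.1; linarith
          · have := hxg.2; rw [← hsdef]; linarith
        · show ((x - 2*π*(q:ℝ) : ℝ) : AddCircle (2*π)) = t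
          rw [aux_coe_shift x q]
          exact hxt
      -- the chain of inequalities
      have h1 : avgAbs φ a ℓ ≤ (s/ℓ) * avgAbs φ g s := aux_avg_mono hII a ℓ g s hl hs hsub
      have hA0 : 0 ≤ avgAbs φ aD s := aux_avg_nonneg φ aD s hs.le
      have h2 : avgAbs φ a ℓ ≤ (2/d) * avgAbs φ aD s := by
        rw [havg_eq] at h1
        calc avgAbs φ a ℓ ≤ (s/ℓ) * avgAbs φ aD s := h1
          _ ≤ (2/d) * avgAbs φ aD s := mul_le_mul_of_nonneg_right hs2 hA0
      have h3 := hbound δ' m kn hkn (by rw [← haDdef]; exact hmem)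
      calc ENNReal.ofReal (avgAbs φ a ℓ) ≤ ENNReal.ofReal ((2/d) * avgAbs φ aD s) :=
            ENNReal.ofReal_le_ofReal h2
        _ = ENNReal.ofReal (2/d) * ENNReal.ofReal (avgAbs φ aD s) := ENNReal.ofReal_mul h2d
        _ ≤ ENNReal.ofReal (2/d) * dyadicMax φ δ' t := by
            refine mul_le_mul_right ?_ _
            have : avgAbs φ aD s = avgAbs φ (2*π*δ' + 2*π*(kn:ℝ)/2^m) (2*π/2^m) := by
              rw [haDdef, hsdef]
            rw [this]
            exact h3
    -- case analysis on which grid misses the interval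
    by_cases hplain : ∃ k : ℤ, (k:ℝ)*s ∈ Set.Ioo a (a+ℓ)
    · by_cases hshift : ∃ k : ℤ, 2*π*δ + (k:ℝ)*s ∈ Set.Ioo a (a+ℓ)
      · -- impossible: the two grids are at distance ≥ d·s ≥ ℓ
        exfalso
        obtain ⟨k₁, hk₁⟩ := hplain
        obtain ⟨k₂, hk₂⟩ := hshift
        have hdist : |(2*π*δ + (k₂:ℝ)*s) - (k₁:ℝ)*s| < ℓ := by
          rw [abs_lt]
          constructor
          · have := hk₁.2; have := hk₂.1; linarith
          · have := hk₁.1; have := hk₂.2; linarith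
        have hddle := dd_le δ m (k₁ - k₂)
        have heq : (2*π*δ + (k₂:ℝ)*s) - (k₁:ℝ)*s = 2*π*(δ - ((k₁ - k₂ : ℤ):ℝ)/2^m) := by
          push_cast
          rw [hsdef]
          field_simp
          ring
        have habs2 : |(2*π*δ + (k₂:ℝ)*s) - (k₁:ℝ)*s| = 2*π*|δ - ((k₁ - k₂ : ℤ):ℝ)/2^m| := by
          rw [heq, abs_mul, abs_of_pos h2π]
        have hlow : d * s ≤ |(2*π*δ + (k₂:ℝ)*s) - (k₁:ℝ)*s| := by
          rw [habs2]
          have h5 : d ≤ 2^m * |δ - ((k₁ - k₂ : ℤ):ℝ)/2^m| := by rw [hdd]; exact hddle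
          rw [hsdef, show d * (2*π/(2:ℝ)^m) = (d*(2*π))/2^m by ring, div_le_iff₀ hpow]
          nlinarith [h5, h2π.le, abs_nonneg (δ - ((k₁ - k₂ : ℤ):ℝ)/2^m)]
        linarith [hsd, hlow, hdist]
      · push_neg at hshift
        have := finish δ (by
          intro kk hkk
          exact hshift kk hkk)
        exact this.trans (mul_le_mul_right (le_max_right _ _) _)
    · push_neg at hplain
      have := finish 0 (by
        intro kk hkk
        refine hplain kk ?_
        have heq0 : 2*π*(0:ℝ) + (kk:ℝ)*s = (kk:ℝ)*s := by ring
        rwa [heq0] at hkk)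
      exact this.trans (mul_le_mul_right (le_max_left _ _) _)
end
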